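/- arXiv:2206.03793 — 2 statements merged into one kernel-verified Lean document; each statement's English description precedes it below -/
import Mathlib

section
/- Every abstract polytope P of rank ≥ 0 can be uniquely factorised into polytopes prime with respect to the join: there exist r ≥ 1 and abstract polytopes Q₁, …, Q_r, each of rank ≥ 0 and prime with respect to the join, such that P is order-isomorphic to Q₁ * ⋯ * Q_r; and if P is also order-isomorphic to R₁ * ⋯ * R_s with each R_j of rank ≥ 0 and prime with respect to the join, then r = s and there is a permutation σ of {1,…,r} such that Q_i is order-isomorphic to R_{σ(i)} for every i. -/
universe u v

/-- An abstract polytope of rank `n ≥ -1`: a partial order with a least element (the `⊥` of the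
`OrderBot` instance) and a greatest element, in which every maximal chain has exactly `n + 2`
elements, every interval admitting a maximal chain of at least 4 elements is connected, and the
diamond condition holds. -/
structure IsAbstractPolytope (P : Type u) [PartialOrder P] [OrderBot P] (n : ℤ) : Prop where
  neg_one_le : -1 ≤ n
  exists_top : ∃ t : P, IsTop t
  maxChain_card : ∀ s : Set P, IsMaxChain (· ≤ ·) s → s.ncard = (n + 2).toNat
  connected : ∀ x z : P, x ≤ z →
      (∃ c : Set (Set.Icc x z), IsMaxChain (· ≤ ·) c ∧ 4 ≤ c.ncard) →
      ∀ F G : Set.Icc x z, (F : P) ≠ x → (F : P) ≠ z → (G : P) ≠ x → (G : P) ≠ z →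
        Relation.ReflTransGen
          (fun a b : Set.Icc x z =>
            ((a : P) ≠ x ∧ (a : P) ≠ z ∧ (b : P) ≠ x ∧ (b : P) ≠ z) ∧
              ((a : P) ≤ (b : P) ∨ (b : P) ≤ (a : P))) F G
  diamond : ∀ x z : P, x < z →
      (∀ c : Set (Set.Icc x z), IsMaxChain (· ≤ ·) c → c.ncard = 4) →
      {y : P | x < y ∧ y < z}.ncard = 2

/-- `x` has rank `k` if every maximal chain of the interval `[⊥, x] = Set.Iic x`
has exactly `k + 2` elements. -/
def HasRank {P : Type u} [PartialOrder P] [OrderBot P] (x : P) (k : ℤ) : Prop :=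
  ∀ c : Set (Set.Iic x), IsMaxChain (· ≤ ·) c → c.ncard = (k + 2).toNat

/-- The Cartesian product `P ×c Q` of two bounded posets: the subposet of `P × Q`
consisting of `(⊥, ⊥)` together with all pairs with both entries different from `⊥`.
(The join `P * Q` is just `P × Q` with the componentwise order.) -/
abbrev CartProd (P : Type u) (Q : Type v) [PartialOrder P] [OrderBot P]
    [PartialOrder Q] [OrderBot Q] : Type (max u v) :=
  {x : P × Q // x = (⊥, ⊥) ∨ (x.1 ≠ ⊥ ∧ x.2 ≠ ⊥)}

instance CartProd.instOrderBot (P : Type u) (Q : Type v) [PartialOrder P] [OrderBot P]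
    [PartialOrder Q] [OrderBot Q] : OrderBot (CartProd P Q) where
  bot := ⟨(⊥, ⊥), Or.inl rfl⟩
  bot_le x := show ((⊥, ⊥) : P × Q) ≤ x.val from bot_le

/-- The iterated Cartesian product of a family of bounded posets: tuples which are either
everywhere `⊥` or nowhere `⊥`. -/
abbrev CartPi {ι : Type v} (Q : ι → Type u) [∀ i, PartialOrder (Q i)] [∀ i, OrderBot (Q i)] :
    Type (max u v) :=
  {f : (i : ι) → Q i // (∀ i, f i = ⊥) ∨ (∀ i, f i ≠ ⊥)}

instance CartPi.instOrderBot {ι : Type v} (Q : ι → Type u) [∀ i, PartialOrder (Q i)]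
    [∀ i, OrderBot (Q i)] : OrderBot (CartPi Q) where
  bot := ⟨fun _ => ⊥, Or.inl fun _ => rfl⟩
  bot_le f := show (fun _ => ⊥) ≤ f.val from bot_le

/-- The `k`-fold Cartesian product of a bounded poset with itself. -/
abbrev CartPow (P : Type u) [PartialOrder P] [OrderBot P] (k : ℕ) : Type u :=
  CartPi (fun _ : Fin k => P)

/-- A bundled poset with a least element. -/
structure BddPoset : Type (u + 1) where
  carrier : Type u
  [po : PartialOrder carrier]
  [ob : OrderBot carrier]

attribute [instance] BddPoset.po BddPoset.ob

instance : CoeSort BddPoset.{u} (Type u) := ⟨BddPoset.carrier⟩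

/-- Prime with respect to the join: not order-isomorphic to a join `A * B = A × B` of two
abstract polytopes of rank at least `0`. -/
def JoinPrime (X : Type u) [PartialOrder X] [OrderBot X] : Prop :=
  ¬ ∃ (A B : BddPoset.{u}) (a b : ℤ), 0 ≤ a ∧ 0 ≤ b ∧
      IsAbstractPolytope A.carrier a ∧ IsAbstractPolytope B.carrier b ∧
      Nonempty (X ≃o (A.carrier × B.carrier))

/-- Prime with respect to the Cartesian product: not order-isomorphic to a Cartesian product
of two abstract polytopes of rank at least `1`. -/
def CartPrime (X : Type u) [PartialOrder X] [OrderBot X] : Prop :=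
  ¬ ∃ (A B : BddPoset.{u}) (a b : ℤ), 1 ≤ a ∧ 1 ≤ b ∧
      IsAbstractPolytope A.carrier a ∧ IsAbstractPolytope B.carrier b ∧
      Nonempty (X ≃o CartProd A.carrier B.carrier)

/-- `R` is a factor of `X` with respect to the join. -/
def JoinFactor (R : BddPoset.{u}) (X : Type u) [PartialOrder X] [OrderBot X] : Prop :=
  ∃ S : BddPoset.{u}, (∃ s : ℤ, IsAbstractPolytope S.carrier s) ∧
    Nonempty (X ≃o (R.carrier × S.carrier))

/-- `R` is a factor of `X` with respect to the Cartesian product. -/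
def CartFactor (R : BddPoset.{u}) (X : Type u) [PartialOrder X] [OrderBot X] : Prop :=
  ∃ S : BddPoset.{u}, (∃ s : ℤ, IsAbstractPolytope S.carrier s) ∧
    Nonempty (X ≃o CartProd R.carrier S.carrier)

/-- Relatively prime with respect to the join: no join-prime abstract polytope of rank `≥ 0` is a
join-factor of both. -/
def JoinRelPrime (X : Type u) [PartialOrder X] [OrderBot X]
    (Y : Type u) [PartialOrder Y] [OrderBot Y] : Prop :=
  ¬ ∃ R : BddPoset.{u}, (∃ r : ℤ, 0 ≤ r ∧ IsAbstractPolytope R.carrier r) ∧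
      JoinPrime R.carrier ∧ JoinFactor R X ∧ JoinFactor R Y

/-- Relatively prime with respect to the Cartesian product. -/
def CartRelPrime (X : Type u) [PartialOrder X] [OrderBot X]
    (Y : Type u) [PartialOrder Y] [OrderBot Y] : Prop :=
  ¬ ∃ R : BddPoset.{u}, (∃ r : ℤ, 1 ≤ r ∧ IsAbstractPolytope R.carrier r) ∧
      CartPrime R.carrier ∧ CartFactor R X ∧ CartFactor R Y

/-- A pyramid: order-isomorphic to `Q * pt` for some abstract polytope `Q`, where
`pt = Bool` is the two-element chain. -/
def IsPyramid (X : Type u) [PartialOrder X] [OrderBot X] : Prop :=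
  ∃ Q : BddPoset.{u}, (∃ q : ℤ, IsAbstractPolytope Q.carrier q) ∧
    Nonempty (X ≃o (Q.carrier × Bool))

/-- A prism: order-isomorphic to `Q ×c I` for some abstract polytope `Q`, where
`I = Bool × Bool` is the four-element rank-one polytope. -/
def IsPrism (X : Type u) [PartialOrder X] [OrderBot X] : Prop :=
  ∃ Q : BddPoset.{u}, (∃ q : ℤ, IsAbstractPolytope Q.carrier q) ∧
    Nonempty (X ≃o CartProd Q.carrier (Bool × Bool))

/-- The homomorphism from `Equiv.Perm ι` to automorphisms of `ι → G` permuting the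
coordinates: `σ` sends `v` to `v ∘ σ⁻¹`. -/
def permHom (ι : Type v) (G : Type u) [Group G] : Equiv.Perm ι →* MulAut (ι → G) where
  toFun σ :=
    { toFun := fun v => v ∘ σ.symm
      invFun := fun v => v ∘ σ
      left_inv := fun v => by funext i; simp
      right_inv := fun v => by funext i; simp
      map_mul' := fun v w => rfl }
  map_one' := by apply MulEquiv.ext; intro v; funext i; rfl
  map_mul' σ τ := by apply MulEquiv.ext; intro v; funext i; rfl


set_option linter.unusedSectionVars false
set_option linter.unusedVariables false
set_option maxHeartbeats 1000000


section Chains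
variable {A : Type*} {B : Type*} [PartialOrder A] [PartialOrder B]

lemma mem_of_comp_maxChain {c : Set A} (hc : IsMaxChain (· ≤ ·) c) {a : A}
    (h : ∀ b ∈ c, a ≤ b ∨ b ≤ a) : a ∈ c := by
  have h2 : IsChain (· ≤ ·) (insert a c) := hc.1.insert (fun b hb _ => h b hb)
  have h3 := hc.2 h2 (Set.subset_insert a c)
  rw [h3]; exact Set.mem_insert a c

lemma bot_mem_maxChain [OrderBot A] {c : Set A} (hc : IsMaxChain (· ≤ ·) c) : ⊥ ∈ c :=
  mem_of_comp_maxChain hc fun b _ => Or.inl bot_le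

lemma top_mem_maxChain {c : Set A} (hc : IsMaxChain (· ≤ ·) c) {t : A} (ht : IsTop t) : t ∈ c :=
  mem_of_comp_maxChain hc fun b _ => Or.inr (ht b)

lemma isMaxChain_image (e : A ≃o B) {c : Set A} (hc : IsMaxChain (· ≤ ·) c) :
    IsMaxChain (· ≤ ·) (e '' c) := by
  constructor
  · exact IsChain.image_of_map_rel _ _ _ (fun a b h => e.monotone h) hc.1
  · intro t ht hsub
    have hsub2 : c ⊆ e.symm '' t := fun x hx => ⟨e x, hsub ⟨x, hx, rfl⟩, e.symm_apply_apply x⟩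
    have hchain : IsChain (· ≤ ·) (e.symm '' t) :=
      IsChain.image_of_map_rel _ _ _ (fun a b h => e.symm.monotone h) ht
    have hce : c = e.symm '' t := hc.2 hchain hsub2
    refine Set.eq_of_subset_of_subset hsub ?_
    intro x hx
    have hx2 : e.symm x ∈ c := by rw [hce]; exact ⟨x, hx, rfl⟩
    exact ⟨e.symm x, hx2, e.apply_symm_apply x⟩

lemma ncard_image_orderIso (e : A ≃o B) (c : Set A) : (e '' c).ncard = c.ncard :=
  Set.ncard_image_of_injective c e.injective

lemma exists_maxChain_le : ∃ c : Set A, IsMaxChain (· ≤ ·) c :=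
  let ⟨M, hM, _⟩ := (IsChain.empty (r := ((· ≤ ·) : A → A → Prop))).exists_maxChain
  ⟨M, hM⟩

lemma finite_of_ncard_ne_zero {c : Set A} (h : c.ncard ≠ 0) : c.Finite := by
  by_contra hinf
  exact h (Set.Infinite.ncard hinf)

lemma subsingleton_Iic_bot {P : Type u} [PartialOrder P] [OrderBot P] :
    Subsingleton (Set.Iic (⊥ : P)) :=
  ⟨fun a b => Subtype.ext ((le_bot_iff.1 a.2).trans (le_bot_iff.1 b.2).symm)⟩
end Chains

section Proj

variable {P : Type u} [PartialOrder P] [OrderBot P] {ι : Type v} [DecidableEq ι]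
  {T : ι → Type u} [∀ j, PartialOrder (T j)] [∀ j, OrderBot (T j)]

/-- Projection onto the `j`-th coordinate of a product decomposition. -/
noncomputable def proj (ψ : P ≃o ∀ j, T j) (j : ι) (x : P) : P :=
  ψ.symm (Function.update ⊥ j (ψ x j))

/-- Projection away from the `j`-th coordinate. -/
noncomputable def cproj (ψ : P ≃o ∀ j, T j) (j : ι) (x : P) : P :=
  ψ.symm (Function.update (ψ x) j ⊥)

variable (ψ : P ≃o ∀ j, T j)

lemma apply_proj (j : ι) (x : P) : ψ (proj ψ j x) = Function.update ⊥ j (ψ x j) :=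
  ψ.apply_symm_apply _

lemma apply_cproj (j : ι) (x : P) : ψ (cproj ψ j x) = Function.update (ψ x) j ⊥ :=
  ψ.apply_symm_apply _

lemma le_iff_coords {x y : P} : x ≤ y ↔ ∀ j, ψ x j ≤ ψ y j :=
  Iff.trans ψ.le_iff_le.symm Pi.le_def

lemma proj_coord_self (j : ι) (x : P) : ψ (proj ψ j x) j = ψ x j := by
  rw [apply_proj]; simp

lemma proj_coord_ne {j k : ι} (hk : k ≠ j) (x : P) : ψ (proj ψ j x) k = ⊥ := by
  rw [apply_proj, Function.update_of_ne hk]; simp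

lemma cproj_coord_self (j : ι) (x : P) : ψ (cproj ψ j x) j = ⊥ := by
  rw [apply_cproj]; simp

lemma cproj_coord_ne {j k : ι} (hk : k ≠ j) (x : P) : ψ (cproj ψ j x) k = ψ x k := by
  rw [apply_cproj, Function.update_of_ne hk]

lemma proj_le (j : ι) (x : P) : proj ψ j x ≤ x := by
  rw [le_iff_coords ψ]
  intro k
  by_cases h : k = j
  · subst h; rw [proj_coord_self]
  · rw [proj_coord_ne ψ h]; exact bot_le

lemma cproj_le (j : ι) (x : P) : cproj ψ j x ≤ x := by
  rw [le_iff_coords ψ]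
  intro k
  by_cases h : k = j
  · subst h; rw [cproj_coord_self]; exact bot_le
  · rw [cproj_coord_ne ψ h]

lemma proj_le_proj_iff {j : ι} {x y : P} : proj ψ j x ≤ proj ψ j y ↔ ψ x j ≤ ψ y j := by
  rw [le_iff_coords ψ]
  constructor
  · intro h
    have := h j
    rwa [proj_coord_self, proj_coord_self] at this
  · intro h k
    by_cases hk : k = j
    · subst hk; rwa [proj_coord_self, proj_coord_self]
    · rw [proj_coord_ne ψ hk]; exact bot_le

lemma cproj_le_cproj_iff {j : ι} {x y : P} :
    cproj ψ j x ≤ cproj ψ j y ↔ ∀ k, k ≠ j → ψ x k ≤ ψ y k := by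
  rw [le_iff_coords ψ]
  constructor
  · intro h k hk
    have := h k
    rwa [cproj_coord_ne ψ hk, cproj_coord_ne ψ hk] at this
  · intro h k
    by_cases hk : k = j
    · subst hk; rw [cproj_coord_self]; exact bot_le
    · rw [cproj_coord_ne ψ hk, cproj_coord_ne ψ hk]; exact h k hk

lemma proj_mono {j : ι} {x y : P} (h : x ≤ y) : proj ψ j x ≤ proj ψ j y :=
  (proj_le_proj_iff ψ).2 ((le_iff_coords ψ).1 h j)

lemma cproj_mono {j : ι} {x y : P} (h : x ≤ y) : cproj ψ j x ≤ cproj ψ j y :=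
  (cproj_le_cproj_iff ψ).2 (fun k _ => (le_iff_coords ψ).1 h k)

lemma le_iff_proj_coords {x y : P} : x ≤ y ↔ ∀ j, proj ψ j x ≤ proj ψ j y := by
  rw [le_iff_coords ψ]
  exact forall_congr' fun j => (proj_le_proj_iff ψ).symm

lemma le_iff_split (j : ι) {x y : P} :
    x ≤ y ↔ proj ψ j x ≤ proj ψ j y ∧ cproj ψ j x ≤ cproj ψ j y := by
  rw [proj_le_proj_iff ψ, cproj_le_cproj_iff ψ, le_iff_coords ψ]
  constructor
  · exact fun h => ⟨h j, fun k _ => h k⟩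
  · rintro ⟨h1, h2⟩ k
    by_cases hk : k = j
    · subst hk; exact h1
    · exact h2 k hk

lemma coord_eq_bot_of_le_proj {j : ι} {v x : P} (h : x ≤ proj ψ j v) {k : ι} (hk : k ≠ j) :
    ψ x k = ⊥ := by
  have := (le_iff_coords ψ).1 h k
  rw [proj_coord_ne ψ hk] at this
  exact le_bot_iff.1 this

lemma coordj_eq_bot_of_le_cproj {j : ι} {v x : P} (h : x ≤ cproj ψ j v) : ψ x j = ⊥ := by
  have := (le_iff_coords ψ).1 h j
  rw [cproj_coord_self] at this
  exact le_bot_iff.1 this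

lemma proj_eq_self_of_le_proj {j : ι} {v x : P} (h : x ≤ proj ψ j v) : proj ψ j x = x := by
  apply ψ.injective
  rw [apply_proj]
  funext k
  by_cases hk : k = j
  · subst hk; simp
  · rw [Function.update_of_ne hk, coord_eq_bot_of_le_proj ψ h hk]; simp

lemma proj_bot_iff {j : ι} {x : P} : proj ψ j x = ⊥ ↔ ψ x j = ⊥ := by
  constructor
  · intro h
    have h2 : ψ (proj ψ j x) = ψ ⊥ := congrArg ψ h
    rw [apply_proj, ψ.map_bot] at h2
    have h3 := congrFun h2 j
    simpa using h3
  · intro h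
    unfold proj
    rw [h]
    have hu : Function.update (⊥ : ∀ j, T j) j (⊥ : T j) = ⊥ := by
      funext k; by_cases hk : k = j
      · subst hk; simp
      · rw [Function.update_of_ne hk]
    rw [hu]
    exact ψ.symm.map_bot


-- new material

lemma isTop_coord {v : P} (hv : IsTop v) (j : ι) : IsTop (ψ v j) := by
  intro q
  have h1 : ψ.symm (Function.update (ψ v) j q) ≤ v := hv _
  have h2 := (le_iff_coords ψ).1 h1 j
  rwa [ψ.apply_symm_apply, Function.update_self] at h2

lemma isGLB_proj_pair {j : ι} {u v : P} (huv : u ≤ v) :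
    IsGLB {u, proj ψ j v} (proj ψ j u) := by
  constructor
  · rintro w (rfl | rfl)
    · exact proj_le ψ j w
    · exact proj_mono ψ huv
  · intro w hw
    have h1 : w ≤ u := hw (Set.mem_insert _ _)
    have h2 : w ≤ proj ψ j v := hw (Set.mem_insert_of_mem _ rfl)
    rw [le_iff_coords ψ]
    intro k
    by_cases hk : k = j
    · subst hk
      rw [proj_coord_self]
      exact (le_iff_coords ψ).1 h1 k
    · rw [coord_eq_bot_of_le_proj ψ h2 hk]
      exact bot_le

/-- The interval below `u` is isomorphic to the product of intervals below its projections. -/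
noncomputable def iicPiIso (u : P) : Set.Iic u ≃o ∀ j, Set.Iic (proj ψ j u) where
  toFun y := fun j => ⟨proj ψ j y.1, proj_mono ψ y.2⟩
  invFun z := ⟨ψ.symm (fun j => ψ (z j).1 j), by
    rw [Set.mem_Iic, le_iff_coords ψ]
    intro k
    rw [ψ.apply_symm_apply]
    have h1 : (z k).1 ≤ u := le_trans (z k).2 (proj_le ψ k u)
    exact (le_iff_coords ψ).1 h1 k⟩
  left_inv y := by
    apply Subtype.ext
    show ψ.symm (fun j => ψ (proj ψ j y.1) j) = y.1
    have : (fun j => ψ (proj ψ j y.1) j) = ψ y.1 := by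
      funext j; rw [proj_coord_self]
    rw [this, ψ.symm_apply_apply]
  right_inv z := by
    funext j
    apply Subtype.ext
    show proj ψ j (ψ.symm (fun k => ψ (z k).1 k)) = (z j).1
    unfold proj
    rw [ψ.apply_symm_apply]
    have : Function.update (⊥ : ∀ j, T j) j (ψ (z j).1 j) = ψ (z j).1 := by
      funext k
      by_cases hk : k = j
      · subst hk; rw [Function.update_self]
      · rw [Function.update_of_ne hk, coord_eq_bot_of_le_proj ψ (z j).2 hk]; rfl
    rw [this, ψ.symm_apply_apply]
  map_rel_iff' := by
    intro y z
    show (∀ j, (⟨proj ψ j y.1, _⟩ : Set.Iic (proj ψ j u)) ≤ ⟨proj ψ j z.1, _⟩) ↔ _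
    change (∀ j, proj ψ j y.1 ≤ proj ψ j z.1) ↔ _
    exact Iff.trans (le_iff_proj_coords ψ).symm Subtype.coe_le_coe

/-- Splitting off the `j₀`-th coordinate. -/
noncomputable def iicSplitIso (j₀ : ι) (u : P) :
    Set.Iic u ≃o Set.Iic (proj ψ j₀ u) × Set.Iic (cproj ψ j₀ u) where
  toFun y := (⟨proj ψ j₀ y.1, proj_mono ψ y.2⟩, ⟨cproj ψ j₀ y.1, cproj_mono ψ y.2⟩)
  invFun p := ⟨ψ.symm (Function.update (ψ p.2.1) j₀ (ψ p.1.1 j₀)), by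
    rw [Set.mem_Iic, le_iff_coords ψ]
    intro k
    rw [ψ.apply_symm_apply]
    by_cases hk : k = j₀
    · subst hk
      rw [Function.update_self]
      have := (le_iff_coords ψ).1 (le_trans p.1.2 (proj_le ψ k u)) k
      exact this
    · rw [Function.update_of_ne hk]
      exact (le_iff_coords ψ).1 (le_trans p.2.2 (cproj_le ψ j₀ u)) k⟩
  left_inv y := by
    apply Subtype.ext
    show ψ.symm (Function.update (ψ (cproj ψ j₀ y.1)) j₀ (ψ (proj ψ j₀ y.1) j₀)) = y.1
    have : Function.update (ψ (cproj ψ j₀ y.1)) j₀ (ψ (proj ψ j₀ y.1) j₀) = ψ y.1 := by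
      funext k
      by_cases hk : k = j₀
      · subst hk; rw [Function.update_self, proj_coord_self]
      · rw [Function.update_of_ne hk, cproj_coord_ne ψ hk]
    rw [this, ψ.symm_apply_apply]
  right_inv p := by
    obtain ⟨a, b⟩ := p
    have key : ψ (ψ.symm (Function.update (ψ b.1) j₀ (ψ a.1 j₀)))
        = Function.update (ψ b.1) j₀ (ψ a.1 j₀) := ψ.apply_symm_apply _
    apply Prod.ext
    · apply Subtype.ext
      show proj ψ j₀ _ = a.1
      unfold proj
      rw [key, Function.update_self]
      have : Function.update (⊥ : ∀ j, T j) j₀ (ψ a.1 j₀) = ψ a.1 := by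
        funext k
        by_cases hk : k = j₀
        · subst hk; rw [Function.update_self]
        · rw [Function.update_of_ne hk, coord_eq_bot_of_le_proj ψ a.2 hk]; rfl
      rw [this, ψ.symm_apply_apply]
    · apply Subtype.ext
      show cproj ψ j₀ _ = b.1
      unfold cproj
      rw [key, Function.update_idem]
      have : Function.update (ψ b.1) j₀ (⊥ : T j₀) = ψ b.1 := by
        rw [← coordj_eq_bot_of_le_cproj ψ b.2, Function.update_eq_self]
      rw [this, ψ.symm_apply_apply]
  map_rel_iff' := by
    intro y z
    show ((⟨proj ψ j₀ y.1, _⟩ : Set.Iic (proj ψ j₀ u)), (⟨cproj ψ j₀ y.1, _⟩ : Set.Iic (cproj ψ j₀ u))) ≤ _ ↔ _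
    rw [Prod.mk_le_mk]
    exact Iff.trans (and_congr Subtype.mk_le_mk Subtype.mk_le_mk)
      (Iff.trans (le_iff_split ψ j₀).symm Subtype.coe_le_coe)

/-- The interval below the `j₀`-th projection of a top element is isomorphic to `T j₀`. -/
noncomputable def iicCoordIso (j₀ : ι) {v : P} (hv : IsTop v) :
    Set.Iic (proj ψ j₀ v) ≃o T j₀ where
  toFun a := ψ a.1 j₀
  invFun q := ⟨ψ.symm (Function.update ⊥ j₀ q), by
    rw [Set.mem_Iic, le_iff_coords ψ]
    intro k
    rw [ψ.apply_symm_apply]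
    by_cases hk : k = j₀
    · subst hk
      rw [Function.update_self, proj_coord_self]
      exact isTop_coord ψ hv k q
    · rw [Function.update_of_ne hk, proj_coord_ne ψ hk]
      exact le_refl _⟩
  left_inv a := Subtype.ext (proj_eq_self_of_le_proj ψ a.2)
  right_inv q := by
    show ψ (ψ.symm _) j₀ = q
    rw [ψ.apply_symm_apply, Function.update_self]
  map_rel_iff' := by
    intro a b
    show ψ a.1 j₀ ≤ ψ b.1 j₀ ↔ a ≤ b
    constructor
    · intro h
      rw [← Subtype.coe_le_coe, le_iff_coords ψ]
      intro k
      by_cases hk : k = j₀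
      · subst hk; exact h
      · rw [coord_eq_bot_of_le_proj ψ a.2 hk]; exact bot_le
    · intro h
      exact (le_iff_coords ψ).1 (Subtype.coe_le_coe.2 h) j₀

end Proj

section IicMap
variable {A : Type u} {B : Type u} [PartialOrder A] [PartialOrder B]

/-- An order isomorphism restricts to an isomorphism of lower intervals. -/
def iicMap (e : A ≃o B) (u : A) : Set.Iic u ≃o Set.Iic (e u) where
  toFun a := ⟨e a.1, e.monotone a.2⟩
  invFun b := ⟨e.symm b.1, by
    have := e.symm.monotone b.2
    rwa [e.symm_apply_apply] at this⟩
  left_inv a := Subtype.ext (e.symm_apply_apply a.1)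
  right_inv b := Subtype.ext (e.apply_symm_apply b.1)
  map_rel_iff' := by
    intro a b
    show e a.1 ≤ e b.1 ↔ a ≤ b
    exact Iff.trans e.le_iff_le Subtype.coe_le_coe

end IicMap

section Interval
variable {P : Type u} [PartialOrder P] [OrderBot P]

lemma isTop_Iic_top {u : P} : IsTop (⟨u, le_refl u⟩ : Set.Iic u) := fun a => a.2

lemma union_isMaxChain {u : P} {c : Set (Set.Iic u)} {d : Set (Set.Ici u)}
    (hc : IsMaxChain (· ≤ ·) c) (hd : IsMaxChain (· ≤ ·) d) :
    IsMaxChain (· ≤ ·) ((Subtype.val '' c) ∪ (Subtype.val '' d)) := by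
  have humc : u ∈ Subtype.val '' c :=
    ⟨⟨u, le_refl u⟩, top_mem_maxChain hc isTop_Iic_top, rfl⟩
  have humd : u ∈ Subtype.val '' d :=
    ⟨⟨u, le_refl u⟩, mem_of_comp_maxChain hd (fun b _ => Or.inl b.2), rfl⟩
  constructor
  · rintro w (⟨a, ha, rfl⟩ | ⟨a, ha, rfl⟩) v (⟨b, hb, rfl⟩ | ⟨b, hb, rfl⟩) hne
    · have : a ≠ b := fun h => hne (congrArg _ h)
      exact hc.1 ha hb this
    · exact Or.inl (le_trans a.2 b.2)
    · exact Or.inr (le_trans b.2 a.2)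
    · have : a ≠ b := fun h => hne (congrArg _ h)
      exact hd.1 ha hb this
  · intro t ht hsub
    refine Set.eq_of_subset_of_subset hsub ?_
    intro w hw
    have hu : u ∈ t := hsub (Or.inl humc)
    rcases eq_or_ne w u with rfl | hne
    · exact Or.inl humc
    rcases ht hw hu hne with hle | hge
    · left
      refine ⟨⟨w, hle⟩, mem_of_comp_maxChain hc ?_, rfl⟩
      intro b hb
      have hbt : (b : P) ∈ t := hsub (Or.inl ⟨b, hb, rfl⟩)
      rcases eq_or_ne w (b : P) with h | h
      · exact Or.inl (le_of_eq (Subtype.ext h))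
      rcases ht hw hbt h with h' | h'
      · exact Or.inl h'
      · exact Or.inr h'
    · right
      refine ⟨⟨w, hge⟩, mem_of_comp_maxChain hd ?_, rfl⟩
      intro b hb
      have hbt : (b : P) ∈ t := hsub (Or.inr ⟨b, hb, rfl⟩)
      rcases eq_or_ne w (b : P) with h | h
      · exact Or.inl (le_of_eq (Subtype.ext h))
      rcases ht hw hbt h with h' | h'
      · exact Or.inl h'
      · exact Or.inr h'

lemma chain_card_Iic_Ici {n : ℤ} (hP : IsAbstractPolytope P n) {u : P}
    {c : Set (Set.Iic u)} {d : Set (Set.Ici u)}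
    (hc : IsMaxChain (· ≤ ·) c) (hd : IsMaxChain (· ≤ ·) d) :
    c.ncard + d.ncard = (n + 2).toNat + 1 := by
  have hC := union_isMaxChain hc hd
  have hcard := hP.maxChain_card _ hC
  have hne : -1 ≤ n := hP.neg_one_le
  have hpos : (n + 2).toNat ≠ 0 := by omega
  have hCfin : ((Subtype.val '' c) ∪ (Subtype.val '' d)).Finite := by
    apply finite_of_ncard_ne_zero
    rw [hcard]; exact hpos
  have hcfin : (Subtype.val '' c).Finite := hCfin.subset Set.subset_union_left
  have hdfin : (Subtype.val '' d).Finite := hCfin.subset Set.subset_union_right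
  have hinter : (Subtype.val '' c) ∩ (Subtype.val '' d) = {u} := by
    apply Set.eq_of_subset_of_subset
    · rintro w ⟨⟨a, _, rfl⟩, ⟨b, _, hb⟩⟩
      exact Set.mem_singleton_iff.2 (le_antisymm a.2 (hb ▸ b.2))
    · intro w hw
      rw [Set.mem_singleton_iff] at hw
      rw [hw]
      exact ⟨⟨⟨u, le_refl u⟩, top_mem_maxChain hc isTop_Iic_top, rfl⟩,
        ⟨⟨u, le_refl u⟩, mem_of_comp_maxChain hd (fun b _ => Or.inl b.2), rfl⟩⟩
  have := Set.ncard_union_add_ncard_inter (Subtype.val '' c) (Subtype.val '' d) hcfin hdfin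
  rw [hcard, hinter, Set.ncard_singleton,
    Set.ncard_image_of_injective _ Subtype.coe_injective,
    Set.ncard_image_of_injective _ Subtype.coe_injective] at this
  omega

lemma maxChain_Iic_finite_nonempty {n : ℤ} (hP : IsAbstractPolytope P n) {u : P}
    {c : Set (Set.Iic u)} (hc : IsMaxChain (· ≤ ·) c) : 1 ≤ c.ncard := by
  obtain ⟨d, hd⟩ := exists_maxChain_le (A := Set.Ici u)
  have hCfin : ((Subtype.val '' c) ∪ (Subtype.val '' d)).Finite := by
    apply finite_of_ncard_ne_zero
    rw [hP.maxChain_card _ (union_isMaxChain hc hd)]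
    have := hP.neg_one_le
    omega
  have hcfin : c.Finite := by
    have := hCfin.subset (Set.subset_union_left (t := Subtype.val '' d))
    exact Set.Finite.of_finite_image this (Set.injOn_of_injective Subtype.coe_injective)
  have hmem : (⟨u, le_refl u⟩ : Set.Iic u) ∈ c := top_mem_maxChain hc isTop_Iic_top
  exact (Set.ncard_pos hcfin).2 ⟨_, hmem⟩

/-- The isomorphism between an interval inside `Iic u` and the corresponding interval of `P`. -/
def iccIicIso {u : P} (x z : Set.Iic u) : Set.Icc x z ≃o Set.Icc (x : P) (z : P) where
  toFun a := ⟨a.1.1, a.2.1, a.2.2⟩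
  invFun b := ⟨⟨b.1, le_trans b.2.2 z.2⟩, b.2.1, b.2.2⟩
  left_inv a := Subtype.ext (Subtype.ext rfl)
  right_inv b := Subtype.ext rfl
  map_rel_iff' := Iff.rfl

/-- Every lower interval of an abstract polytope is an abstract polytope. -/
lemma exists_rank_Iic {n : ℤ} (hP : IsAbstractPolytope P n) (u : P) :
    ∃ k : ℤ, IsAbstractPolytope (Set.Iic u) k := by
  obtain ⟨d, hd⟩ := exists_maxChain_le (A := Set.Ici u)
  set A : ℕ := (n + 2).toNat with hA
  set m : ℕ := A + 1 - d.ncard with hm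
  have hcard : ∀ c : Set (Set.Iic u), IsMaxChain (· ≤ ·) c → c.ncard = m := by
    intro c hc
    have h1 := chain_card_Iic_Ici hP hc hd
    omega
  have hm1 : 1 ≤ m := by
    obtain ⟨c, hc⟩ := exists_maxChain_le (A := Set.Iic u)
    have := maxChain_Iic_finite_nonempty hP hc
    rw [hcard c hc] at this
    exact this
  refine ⟨(m : ℤ) - 2, ?_, ⟨⟨u, le_refl u⟩, isTop_Iic_top⟩, ?_, ?_, ?_⟩
  · omega
  · intro c hc
    rw [hcard c hc]
    omega
  · -- connected
    intro x z hxz hprem F G hF1 hF2 hG1 hG2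
    set e := iccIicIso x z with he
    have hprem' : ∃ c : Set (Set.Icc (x : P) (z : P)), IsMaxChain (· ≤ ·) c ∧ 4 ≤ c.ncard := by
      obtain ⟨c, hcc, hc4⟩ := hprem
      refine ⟨e '' c, isMaxChain_image e hcc, ?_⟩
      rwa [ncard_image_orderIso]
    have hcon := hP.connected (x : P) (z : P) hxz hprem' (e F) (e G)
      (fun h => hF1 (Subtype.ext h)) (fun h => hF2 (Subtype.ext h))
      (fun h => hG1 (Subtype.ext h)) (fun h => hG2 (Subtype.ext h))
    have hlift := Relation.ReflTransGen.lift
      (p := fun a b : Set.Icc x z =>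
        ((a : Set.Iic u) ≠ x ∧ (a : Set.Iic u) ≠ z ∧ (b : Set.Iic u) ≠ x ∧ (b : Set.Iic u) ≠ z) ∧
          ((a : Set.Iic u) ≤ (b : Set.Iic u) ∨ (b : Set.Iic u) ≤ (a : Set.Iic u)))
      (f := e.symm)
      (fun a b hab => by
        obtain ⟨⟨h1, h2, h3, h4⟩, h5⟩ := hab
        refine ⟨⟨fun h => h1 (congrArg Subtype.val h), fun h => h2 (congrArg Subtype.val h),
          fun h => h3 (congrArg Subtype.val h), fun h => h4 (congrArg Subtype.val h)⟩, h5⟩)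
      _ _ hcon
    rwa [Function.onFun, e.symm_apply_apply, e.symm_apply_apply] at hlift
  · -- diamond
    intro x z hxz hall
    set e := iccIicIso x z with he
    have hall' : ∀ c : Set (Set.Icc (x : P) (z : P)), IsMaxChain (· ≤ ·) c → c.ncard = 4 := by
      intro c hcc
      have := hall (e.symm '' c) (isMaxChain_image e.symm hcc)
      rwa [ncard_image_orderIso] at this
    have hmain := hP.diamond (x : P) (z : P) (Subtype.coe_lt_coe.2 hxz) hall'
    have himg : Subtype.val '' {y : Set.Iic u | x < y ∧ y < z} = {y : P | (x:P) < y ∧ y < (z:P)} := by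
      apply Set.eq_of_subset_of_subset
      · rintro w ⟨a, ⟨h1, h2⟩, rfl⟩
        exact ⟨Subtype.coe_lt_coe.2 h1, Subtype.coe_lt_coe.2 h2⟩
      · rintro w ⟨h1, h2⟩
        have hwu : w ∈ Set.Iic u := le_trans (le_of_lt h2) z.2
        exact ⟨⟨w, hwu⟩, ⟨Subtype.coe_lt_coe.1 h1, Subtype.coe_lt_coe.1 h2⟩, rfl⟩
    calc {y : Set.Iic u | x < y ∧ y < z}.ncard
        = (Subtype.val '' {y : Set.Iic u | x < y ∧ y < z}).ncard :=
          (Set.ncard_image_of_injective _ Subtype.coe_injective).symm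
      _ = 2 := by rw [himg]; exact hmain

lemma rank_Iic_nonneg {u : P} {k : ℤ} (h : IsAbstractPolytope (Set.Iic u) k) (hu : u ≠ ⊥) :
    0 ≤ k := by
  have hbm : (⟨⊥, bot_le⟩ : Set.Iic u) ≠ ⟨u, le_refl u⟩ := by
    intro hcontra
    exact hu (Subtype.ext_iff.1 hcontra).symm
  have hchain : IsChain (· ≤ ·) ({⟨⊥, bot_le⟩, ⟨u, le_refl u⟩} : Set (Set.Iic u)) := by
    apply IsChain.insert IsChain.singleton
    intro b hb _
    exact Or.inl bot_le
  obtain ⟨M, hM, hsub⟩ := hchain.exists_maxChain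
  have hMcard := h.maxChain_card M hM
  have hkne : -1 ≤ k := h.neg_one_le
  have hMfin : M.Finite := by
    apply finite_of_ncard_ne_zero
    rw [hMcard]
    omega
  have h2 : 1 < M.ncard := by
    rw [Set.one_lt_ncard hMfin]
    exact ⟨_, hsub (Set.mem_insert _ _), _, hsub (Set.mem_insert_of_mem _ rfl), hbm⟩
  omega

lemma exists_ne_bot_of_polytope {k : ℤ} (hk : 0 ≤ k) (h : IsAbstractPolytope P k) :
    ∃ x : P, x ≠ ⊥ := by
  obtain ⟨M, hM⟩ := exists_maxChain_le (A := P)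
  have hMcard := h.maxChain_card M hM
  have hMfin : M.Finite := by
    apply finite_of_ncard_ne_zero
    rw [hMcard]
    omega
  have h2 : 1 < M.ncard := by rw [hMcard]; omega
  rw [Set.one_lt_ncard hMfin] at h2
  obtain ⟨a, _, b, _, hab⟩ := h2
  rcases eq_or_ne a ⊥ with rfl | ha
  · exact ⟨b, fun hb => hab hb.symm⟩
  · exact ⟨a, ha⟩

end Interval

section PiIsos

/-- Splitting a `Fin (m+1)`-indexed product into head and tail. -/
def finConsIso {m : ℕ} (B : Fin (m + 1) → Type u) [∀ i, Preorder (B i)] :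
    ((i : Fin (m + 1)) → B i) ≃o (B 0 × ((i : Fin m) → B i.succ)) where
  toFun f := (f 0, fun i => f i.succ)
  invFun p := Fin.cons p.1 p.2
  left_inv f := by
    funext i
    refine Fin.cases rfl (fun j => rfl) i
  right_inv p := rfl
  map_rel_iff' := by
    intro f g
    rw [Prod.mk_le_mk]
    constructor
    · rintro ⟨h0, hs⟩ i
      refine Fin.cases h0 hs i
    · intro h
      exact ⟨h 0, fun i => h i.succ⟩

def finZeroProdIso (B : Fin 0 → Type u) [∀ i, Preorder (B i)] (Y : Type u) [Preorder Y] :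
    (((i : Fin 0) → B i) × Y) ≃o Y where
  toFun p := p.2
  invFun y := (fun i => i.elim0, y)
  left_inv p := by
    refine Prod.ext ?_ rfl
    funext i
    exact i.elim0
  right_inv y := rfl
  map_rel_iff' := by
    intro p q
    constructor
    · intro h
      exact ⟨fun i => i.elim0, h⟩
    · intro h
      exact h.2

def prodCongrIso {A B C D : Type*} [Preorder A] [Preorder B] [Preorder C] [Preorder D]
    (e1 : A ≃o C) (e2 : B ≃o D) : (A × B) ≃o (C × D) where
  toFun p := (e1 p.1, e2 p.2)
  invFun p := (e1.symm p.1, e2.symm p.2)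
  left_inv p := by
    refine Prod.ext ?_ ?_ <;> simp
  right_inv p := by
    refine Prod.ext ?_ ?_ <;> simp
  map_rel_iff' := by
    intro p q
    show (e1 p.1, e2 p.2) ≤ (e1 q.1, e2 q.2) ↔ p ≤ q
    rw [Prod.mk_le_mk, Prod.le_def]
    exact and_congr e1.le_iff_le e2.le_iff_le

def prodAssocIso {A B C : Type*} [Preorder A] [Preorder B] [Preorder C] :
    ((A × B) × C) ≃o (A × (B × C)) where
  toFun p := (p.1.1, p.1.2, p.2)
  invFun p := ((p.1, p.2.1), p.2.2)
  left_inv p := rfl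
  right_inv p := rfl
  map_rel_iff' := by
    intro p q
    show (p.1.1, p.1.2, p.2) ≤ (q.1.1, q.1.2, q.2) ↔ p ≤ q
    simp only [Prod.mk_le_mk, Prod.le_def]
    tauto

/-- A product of bounded posets, all but one of which are trivial, collapses to that factor. -/
def collapseIso {r : ℕ} (T : Fin r → Type u) [∀ j, PartialOrder (T j)] [∀ j, OrderBot (T j)]
    (j₀ : Fin r) (h : ∀ j, j ≠ j₀ → Subsingleton (T j)) : ((j : Fin r) → T j) ≃o T j₀ where
  toFun f := f j₀
  invFun x := Function.update ⊥ j₀ x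
  left_inv f := by
    funext j
    show Function.update ⊥ j₀ (f j₀) j = f j
    by_cases hj : j = j₀
    · subst hj; rw [Function.update_self]
    · rw [Function.update_of_ne hj]
      exact @Subsingleton.elim _ (h j hj) _ _
  right_inv x := Function.update_self _ _ _
  map_rel_iff' := by
    intro f g
    constructor
    · intro hle j
      by_cases hj : j = j₀
      · subst hj; exact hle
      · exact le_of_eq (@Subsingleton.elim _ (h j hj) _ _)
    · intro hle
      exact hle j₀

end PiIsos

section Merge

lemma merge_factorizations (r1 r2 : ℕ) (Q1 : Fin r1 → BddPoset.{u}) (Q2 : Fin r2 → BddPoset.{u}) :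
    ∃ Q : Fin (r2 + r1) → BddPoset.{u},
      (∀ k, (∃ i, Q k = Q1 i) ∨ (∃ j, Q k = Q2 j)) ∧
      Nonempty ((((i : Fin r1) → (Q1 i).carrier) × ((j : Fin r2) → (Q2 j).carrier)) ≃o
        ((k : Fin (r2 + r1)) → (Q k).carrier)) := by
  induction r1 with
  | zero =>
    exact ⟨Q2, fun k => Or.inr ⟨k, rfl⟩, ⟨finZeroProdIso _ _⟩⟩
  | succ r1 ih =>
    obtain ⟨Qm, hQm, ⟨em⟩⟩ := ih (fun i => Q1 i.succ)
    refine ⟨Fin.cons (Q1 0) Qm, ?_, ⟨?_⟩⟩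
    · intro k
      refine Fin.cases ?_ ?_ k
      · exact Or.inl ⟨0, rfl⟩
      · intro j
        rcases hQm j with ⟨i, hi⟩ | ⟨jj, hj⟩
        · exact Or.inl ⟨i.succ, hi⟩
        · exact Or.inr ⟨jj, hj⟩
    · exact ((prodCongrIso (finConsIso (fun i => (Q1 i).carrier)) (OrderIso.refl _)).trans
        ((prodAssocIso).trans (prodCongrIso (OrderIso.refl _) em))).trans
        (finConsIso (fun k : Fin (r2 + r1 + 1) => ((Fin.cons (Q1 0) Qm : Fin (r2 + r1 + 1) → BddPoset.{u}) k).carrier)).symm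

end Merge

section RankAdd
variable {A : Type*} {B : Type*} [PartialOrder A] [PartialOrder B] [OrderBot A] [OrderBot B]

lemma prod_maxChain {cA : Set A} {cB : Set B} (hA : IsMaxChain (· ≤ ·) cA)
    (hB : IsMaxChain (· ≤ ·) cB) {tA : A} (htA : IsTop tA) :
    IsMaxChain (· ≤ ·) (((fun x => (x, (⊥ : B))) '' cA) ∪ ((fun y => (tA, y)) '' cB)) := by
  have hmem1 : (tA, (⊥ : B)) ∈ (fun x => (x, (⊥ : B))) '' cA :=
    ⟨tA, top_mem_maxChain hA htA, rfl⟩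
  have hmem2 : (tA, (⊥ : B)) ∈ (fun y => (tA, y)) '' cB :=
    ⟨⊥, bot_mem_maxChain hB, rfl⟩
  constructor
  · rintro w (⟨x, hx, rfl⟩ | ⟨x, hx, rfl⟩) v (⟨y, hy, rfl⟩ | ⟨y, hy, rfl⟩) hne
    · have hxy : x ≠ y := fun h => hne (by rw [h])
      rcases hA.1 hx hy hxy with h | h
      · exact Or.inl ⟨h, le_refl _⟩
      · exact Or.inr ⟨h, le_refl _⟩
    · exact Or.inl ⟨htA x, bot_le⟩
    · exact Or.inr ⟨htA y, bot_le⟩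
    · have hxy : x ≠ y := fun h => hne (by rw [h])
      rcases hB.1 hx hy hxy with h | h
      · exact Or.inl ⟨le_refl _, h⟩
      · exact Or.inr ⟨le_refl _, h⟩
  · intro t ht hsub
    refine Set.eq_of_subset_of_subset hsub ?_
    intro w hw
    have htmem : (tA, (⊥ : B)) ∈ t := hsub (Or.inl hmem1)
    rcases eq_or_ne w (tA, (⊥ : B)) with rfl | hne
    · exact Or.inl hmem1
    rcases ht hw htmem hne with hle | hge
    · -- w ≤ (tA, ⊥), so w.2 = ⊥
      have hw2 : w.2 = ⊥ := le_bot_iff.1 hle.2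
      left
      refine ⟨w.1, mem_of_comp_maxChain hA ?_, ?_⟩
      · intro x hx
        have hxt : (x, (⊥ : B)) ∈ t := hsub (Or.inl ⟨x, hx, rfl⟩)
        rcases eq_or_ne w (x, (⊥ : B)) with h | h
        · exact Or.inl (le_of_eq (congrArg Prod.fst h))
        rcases ht hw hxt h with h' | h'
        · exact Or.inl h'.1
        · exact Or.inr h'.1
      · rw [← hw2]
    · -- (tA, ⊥) ≤ w, so w.1 = tA
      have hw1 : w.1 = tA := le_antisymm (htA w.1) hge.1
      right
      refine ⟨w.2, mem_of_comp_maxChain hB ?_, ?_⟩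
      · intro y hy
        have hyt : (tA, y) ∈ t := hsub (Or.inr ⟨y, hy, rfl⟩)
        rcases eq_or_ne w (tA, y) with h | h
        · exact Or.inl (le_of_eq (congrArg Prod.snd h))
        rcases ht hw hyt h with h' | h'
        · exact Or.inl h'.2
        · exact Or.inr h'.2
      · rw [← hw1]

lemma rank_add {P : Type u} [PartialOrder P] [OrderBot P] {n a b : ℤ}
    (hP : IsAbstractPolytope P n) (hA : IsAbstractPolytope A a) (hB : IsAbstractPolytope B b)
    (e : P ≃o A × B) : n = a + b + 1 := by
  obtain ⟨cA, hcA⟩ := exists_maxChain_le (A := A)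
  obtain ⟨cB, hcB⟩ := exists_maxChain_le (A := B)
  obtain ⟨tA, htA⟩ := hA.exists_top
  have hC := prod_maxChain hcA hcB htA
  have h1 := hP.maxChain_card _ (isMaxChain_image e.symm hC)
  rw [ncard_image_orderIso] at h1
  have hAcard := hA.maxChain_card cA hcA
  have hBcard := hB.maxChain_card cB hcB
  have hna := hA.neg_one_le
  have hnb := hB.neg_one_le
  have hnn := hP.neg_one_le
  have hAfin : cA.Finite := by
    apply finite_of_ncard_ne_zero; rw [hAcard]; omega
  have hBfin : cB.Finite := by
    apply finite_of_ncard_ne_zero; rw [hBcard]; omega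
  have hinj1 : Function.Injective (fun x : A => (x, (⊥ : B))) :=
    fun x y h => congrArg Prod.fst h
  have hinj2 : Function.Injective (fun y : B => (tA, y)) :=
    fun x y h => congrArg Prod.snd h
  have hinter : ((fun x => (x, (⊥ : B))) '' cA) ∩ ((fun y => (tA, y)) '' cB) = {(tA, (⊥ : B))} := by
    apply Set.eq_of_subset_of_subset
    · rintro w ⟨⟨x, hx, rfl⟩, ⟨y, hy, hyw⟩⟩
      have h1 : x = tA := (congrArg Prod.fst hyw).symm
      have h2 : (⊥ : B) = y := (congrArg Prod.snd hyw).symm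
      rw [Set.mem_singleton_iff, h1]
    · intro w hw
      rw [Set.mem_singleton_iff] at hw
      rw [hw]
      exact ⟨⟨tA, top_mem_maxChain hcA htA, rfl⟩, ⟨⊥, bot_mem_maxChain hcB, rfl⟩⟩
  have hu := Set.ncard_union_add_ncard_inter ((fun x => (x, (⊥ : B))) '' cA)
    ((fun y => (tA, y)) '' cB) (hAfin.image _) (hBfin.image _)
  rw [h1, hinter, Set.ncard_singleton, Set.ncard_image_of_injective _ hinj1,
    Set.ncard_image_of_injective _ hinj2, hAcard, hBcard] at hu
  omega

end RankAdd

section Existence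

lemma existence (m : ℕ) : ∀ (P : Type u) [PartialOrder P] [OrderBot P] (k : ℤ),
    0 ≤ k → k.toNat ≤ m → IsAbstractPolytope P k →
    ∃ (r : ℕ) (Q : Fin r → BddPoset.{u}), 1 ≤ r ∧
      (∀ i, ∃ kk : ℤ, 0 ≤ kk ∧ IsAbstractPolytope (Q i).carrier kk ∧ JoinPrime (Q i).carrier) ∧
      Nonempty (P ≃o ((i : Fin r) → (Q i).carrier)) := by
  induction m with
  | zero =>
    intro P _ _ k hk hkm hP
    by_cases hprime : JoinPrime P
    · exact ⟨1, fun _ => ⟨P⟩, le_refl 1,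
        fun _ => ⟨k, hk, hP, hprime⟩, ⟨(OrderIso.funUnique (Fin 1) P).symm⟩⟩
    · exfalso
      obtain ⟨A, B, a, b, ha, hb, hA, hB, ⟨e⟩⟩ := not_not.1 hprime
      have := rank_add hP hA hB e
      omega
  | succ m ih =>
    intro P _ _ k hk hkm hP
    by_cases hprime : JoinPrime P
    · exact ⟨1, fun _ => ⟨P⟩, le_refl 1,
        fun _ => ⟨k, hk, hP, hprime⟩, ⟨(OrderIso.funUnique (Fin 1) P).symm⟩⟩
    · obtain ⟨A, B, a, b, ha, hb, hA, hB, ⟨e⟩⟩ := not_not.1 hprime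
      have hkab : k = a + b + 1 := rank_add hP hA hB e
      obtain ⟨ra, QA, hra, hQA, ⟨eA⟩⟩ := ih A.carrier a ha (by omega) hA
      obtain ⟨rb, QB, hrb, hQB, ⟨eB⟩⟩ := ih B.carrier b hb (by omega) hB
      obtain ⟨Q, hQmem, ⟨eM⟩⟩ := merge_factorizations ra rb QA QB
      refine ⟨rb + ra, Q, by omega, ?_, ⟨(e.trans (prodCongrIso eA eB)).trans eM⟩⟩
      intro i
      rcases hQmem i with ⟨i', hi⟩ | ⟨j', hj⟩
      · rw [hi]; exact hQA i'
      · rw [hj]; exact hQB j'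

end Existence

section Uniqueness
variable {P : Type u} [PartialOrder P] [OrderBot P]

lemma proj_le_cproj {s : ℕ} {R : Fin s → BddPoset.{u}}
    (ψ : P ≃o ((j : Fin s) → (R j).carrier)) {j₁ j₂ : Fin s} (h : j₂ ≠ j₁) (x : P) :
    proj ψ j₂ x ≤ cproj ψ j₁ x := by
  rw [le_iff_coords ψ]
  intro k
  by_cases hk : k = j₂
  · subst hk
    rw [proj_coord_self, cproj_coord_ne ψ h]
  · rw [proj_coord_ne ψ hk]
    exact bot_le

lemma existsUnique_proj_ne_bot {n : ℤ} (hP : IsAbstractPolytope P n)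
    {s : ℕ} {R : Fin s → BddPoset.{u}} (ψ : P ≃o ((j : Fin s) → (R j).carrier))
    {u : P} {X : Type u} [PartialOrder X] [OrderBot X]
    {k : ℤ} (hk : 0 ≤ k) (hXpoly : IsAbstractPolytope X k)
    (hXprime : JoinPrime X) (e : X ≃o Set.Iic u) :
    ∃! j, proj ψ j u ≠ ⊥ := by
  obtain ⟨x0, hx0⟩ := exists_ne_bot_of_polytope hk hXpoly
  have hex : ∃ j, proj ψ j u ≠ ⊥ := by
    by_contra hno
    push_neg at hno
    have hsub : ∀ j, Subsingleton (Set.Iic (proj ψ j u)) := by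
      intro j
      rw [hno j]
      exact subsingleton_Iic_bot
    haveI := hsub
    haveI : Subsingleton ((j : Fin s) → Set.Iic (proj ψ j u)) :=
      ⟨fun f g => funext fun j => Subsingleton.elim _ _⟩
    haveI : Subsingleton (Set.Iic u) := (iicPiIso ψ u).toEquiv.subsingleton
    haveI : Subsingleton X := e.toEquiv.subsingleton
    exact hx0 (Subsingleton.elim x0 ⊥)
  obtain ⟨j₁, hj₁⟩ := hex
  refine ⟨j₁, hj₁, ?_⟩
  intro j₂ hj₂
  by_contra hne
  -- two distinct nontrivial projections: contradiction with primality
  apply hXprime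
  have hcne : cproj ψ j₂ u ≠ ⊥ := by
    intro hbot
    exact hj₁ (le_bot_iff.1 (hbot ▸ proj_le_cproj ψ (Ne.symm hne) u))
  obtain ⟨ka, hka⟩ := exists_rank_Iic hP (proj ψ j₂ u)
  obtain ⟨kb, hkb⟩ := exists_rank_Iic hP (cproj ψ j₂ u)
  refine ⟨⟨Set.Iic (proj ψ j₂ u)⟩, ⟨Set.Iic (cproj ψ j₂ u)⟩, ka, kb,
    rank_Iic_nonneg hka hj₂, rank_Iic_nonneg hkb hcne, hka, hkb,
    ⟨e.trans (iicSplitIso ψ j₂ u)⟩⟩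

lemma uniqueness {n : ℤ} (hP : IsAbstractPolytope P n)
    (r s : ℕ) (Q : Fin r → BddPoset.{u}) (R : Fin s → BddPoset.{u})
    (hQ : ∀ i, ∃ k : ℤ, 0 ≤ k ∧ IsAbstractPolytope (Q i).carrier k ∧ JoinPrime (Q i).carrier)
    (hR : ∀ j, ∃ k : ℤ, 0 ≤ k ∧ IsAbstractPolytope (R j).carrier k ∧ JoinPrime (R j).carrier)
    (φ : P ≃o ((i : Fin r) → (Q i).carrier)) (ψ : P ≃o ((j : Fin s) → (R j).carrier)) :
    r = s ∧ ∃ σ : Fin r ≃ Fin s, ∀ i, Nonempty ((Q i).carrier ≃o (R (σ i)).carrier) := by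
  obtain ⟨tP, htP⟩ := hP.exists_top
  have hEU : ∀ i, ∃! j, proj ψ j (proj φ i tP) ≠ ⊥ := by
    intro i
    obtain ⟨k, hk0, hkpoly, hkprime⟩ := hQ i
    exact existsUnique_proj_ne_bot hP ψ hk0 hkpoly hkprime ((iicCoordIso φ i htP).symm)
  have hFU : ∀ j, ∃! i, proj φ i (proj ψ j tP) ≠ ⊥ := by
    intro j
    obtain ⟨k, hk0, hkpoly, hkprime⟩ := hR j
    exact existsUnique_proj_ne_bot hP φ hk0 hkpoly hkprime ((iicCoordIso ψ j htP).symm)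
  choose σ hσ hσu using hEU
  choose τ hτ hτu using hFU
  have hcross : ∀ i j, proj ψ j (proj φ i tP) = proj φ i (proj ψ j tP) := by
    intro i j
    have h1 : IsGLB {proj φ i tP, proj ψ j tP} (proj ψ j (proj φ i tP)) :=
      isGLB_proj_pair ψ (htP _)
    have h2 : IsGLB {proj ψ j tP, proj φ i tP} (proj φ i (proj ψ j tP)) :=
      isGLB_proj_pair φ (htP _)
    rw [Set.pair_comm] at h2
    exact h1.unique h2
  have hτσ : ∀ i, τ (σ i) = i := by
    intro i
    have h1 : proj φ i (proj ψ (σ i) tP) ≠ ⊥ := by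
      rw [← hcross]
      exact hσ i
    exact (hτu (σ i) i h1).symm
  have hστ : ∀ j, σ (τ j) = j := by
    intro j
    have h1 : proj ψ j (proj φ (τ j) tP) ≠ ⊥ := by
      rw [hcross]
      exact hτ j
    exact (hσu (τ j) j h1).symm
  refine ⟨Fin.equiv_iff_eq.1 ⟨⟨σ, τ, hτσ, hστ⟩⟩, ⟨σ, τ, hτσ, hστ⟩, ?_⟩
  intro i
  show Nonempty ((Q i).carrier ≃o (R (σ i)).carrier)
  -- collapse isos
  have col1 : ((j : Fin s) → Set.Iic (proj ψ j (proj φ i tP))) ≃o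
      Set.Iic (proj ψ (σ i) (proj φ i tP)) := by
    refine collapseIso _ (σ i) ?_
    intro j hj
    have hbot : proj ψ j (proj φ i tP) = ⊥ := by
      by_contra hne
      exact hj (hσu i j hne)
    rw [hbot]
    exact subsingleton_Iic_bot
  have col2 : ((i' : Fin r) → Set.Iic (proj φ i' (proj ψ (σ i) tP))) ≃o
      Set.Iic (proj φ i (proj ψ (σ i) tP)) := by
    refine collapseIso _ i ?_
    intro i' hi'
    have hbot : proj φ i' (proj ψ (σ i) tP) = ⊥ := by
      by_contra hne
      have := hτu (σ i) i' hne
      rw [hτσ i] at this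
      exact hi' this
    rw [hbot]
    exact subsingleton_Iic_bot
  have iso1 : (Q i).carrier ≃o Set.Iic (proj ψ (σ i) (proj φ i tP)) :=
    ((iicCoordIso φ i htP).symm.trans (iicPiIso ψ (proj φ i tP))).trans col1
  have iso2 : (R (σ i)).carrier ≃o Set.Iic (proj φ i (proj ψ (σ i) tP)) :=
    ((iicCoordIso ψ (σ i) htP).symm.trans (iicPiIso φ (proj ψ (σ i) tP))).trans col2
  have key : Set.Iic (proj ψ (σ i) (proj φ i tP)) = Set.Iic (proj φ i (proj ψ (σ i) tP)) := by
    rw [hcross]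
  exact ⟨(iso1.trans (OrderIso.setCongr _ _ key)).trans iso2.symm⟩

end Uniqueness


/-- Every abstract polytope of rank `≥ 0` has a factorisation, unique up to
permutation and order-isomorphism of the factors, into polytopes of rank `≥ 0` that are prime
with respect to the join (an `r`-fold join being a dependent product with componentwise order). -/
theorem unique_join_factorisation (P : Type u) [PartialOrder P] [OrderBot P] (n : ℤ)
    (hn : 0 ≤ n) (hP : IsAbstractPolytope P n) :
    ∃ (r : ℕ) (Q : Fin r → BddPoset.{u}), 1 ≤ r ∧
      (∀ i, ∃ k : ℤ, 0 ≤ k ∧ IsAbstractPolytope (Q i).carrier k ∧ JoinPrime (Q i).carrier) ∧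
      Nonempty (P ≃o ((i : Fin r) → (Q i).carrier)) ∧
      ∀ (s : ℕ) (R : Fin s → BddPoset.{u}), 1 ≤ s →
        (∀ j, ∃ k : ℤ, 0 ≤ k ∧ IsAbstractPolytope (R j).carrier k ∧ JoinPrime (R j).carrier) →
        Nonempty (P ≃o ((j : Fin s) → (R j).carrier)) →
        r = s ∧ ∃ σ : Fin r ≃ Fin s, ∀ i, Nonempty ((Q i).carrier ≃o (R (σ i)).carrier) := by
  obtain ⟨r, Q, hr, hQ, ⟨φ⟩⟩ := existence n.toNat P n hn (le_refl _) hP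
  refine ⟨r, Q, hr, hQ, ⟨φ⟩, ?_⟩
  intro s R hs hR hψ
  obtain ⟨ψ⟩ := hψ
  exact uniqueness hP r s Q R hQ hR φ ψ
end

section
/- Let P and Q be abstract polytopes that are relatively prime with respect to the join. Then Aut(P * Q) is isomorphic as a group to Aut(P) × Aut(Q). -/
universe u v

open Set

section chains
variable {α : Type*} {β : Type*} [Preorder α] [Preorder β]

lemma isMaxChain_image_s4 (e : α ≃o β) {s : Set α} (hs : IsMaxChain (· ≤ ·) s) :
    IsMaxChain (· ≤ ·) (e '' s) := by
  constructor
  · exact hs.1.image_of_map_rel _ _ _ (fun a b h => e.monotone h)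
  · intro t ht hsub
    have h1 : IsChain (· ≤ ·) (e.symm '' t) := ht.image_of_map_rel _ _ _ (fun a b h => e.symm.monotone h)
    have h2 : s ⊆ e.symm '' t := fun x hx => ⟨e x, hsub ⟨x, hx, rfl⟩, e.symm_apply_apply x⟩
    have h3 := hs.2 h1 h2
    rw [h3, Set.image_image]
    simp

end chains

lemma bot_mem_of_isMaxChain {α : Type*} [PartialOrder α] [OrderBot α] {s : Set α}
    (hs : IsMaxChain (· ≤ ·) s) : ⊥ ∈ s := by
  have h1 : IsChain (· ≤ ·) (insert ⊥ s) := hs.1.insert (fun b _ _ => Or.inl bot_le)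
  have h2 := hs.2 h1 (Set.subset_insert _ _)
  rw [h2]; exact Set.mem_insert _ _

lemma top_mem_of_isMaxChain {α : Type*} [PartialOrder α] {t : α} (ht : IsTop t) {s : Set α}
    (hs : IsMaxChain (· ≤ ·) s) : t ∈ s := by
  have h1 : IsChain (· ≤ ·) (insert t s) := hs.1.insert (fun b _ _ => Or.inr (ht b))
  have h2 := hs.2 h1 (Set.subset_insert _ _)
  rw [h2]; exact Set.mem_insert _ _

/-- Restriction of an order iso to a closed interval. -/
def OrderIso.iccCongr {α β : Type*} [Preorder α] [Preorder β] (e : α ≃o β) (x z : α) :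
    Set.Icc x z ≃o Set.Icc (e x) (e z) where
  toEquiv := e.toEquiv.subtypeEquiv (fun a => by simp [Set.mem_Icc, e.le_iff_le])
  map_rel_iff' := by intro a b; exact e.le_iff_le

@[simp] lemma OrderIso.iccCongr_symm_coe {α β : Type*} [Preorder α] [Preorder β] (e : α ≃o β)
    (x z : α) (a : Set.Icc (e x) (e z)) :
    (((e.iccCongr x z).symm a : α)) = e.symm (a : β) := rfl

@[simp] lemma OrderIso.iccCongr_coe {α β : Type*} [Preorder α] [Preorder β] (e : α ≃o β)
    (x z : α) (a : Set.Icc x z) : ((e.iccCongr x z) a : β) = e (a : α) := rfl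

/-- The interval `[x,z]` of `α` inside `α × β` (with second coordinate `⊥`). -/
def iccProdBotIso {α β : Type*} [PartialOrder α] [PartialOrder β] [OrderBot β] (x z : α) :
    Set.Icc x z ≃o Set.Icc ((x, (⊥:β))) ((z, ⊥)) where
  toFun a := ⟨((a : α), ⊥), ⟨⟨a.2.1, le_rfl⟩, ⟨a.2.2, le_rfl⟩⟩⟩
  invFun w := ⟨w.1.1, ⟨w.2.1.1, w.2.2.1⟩⟩
  left_inv a := rfl
  right_inv w := by
    apply Subtype.ext
    have h : w.1.2 = ⊥ := le_antisymm w.2.2.2 bot_le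
    exact Prod.ext rfl h.symm
  map_rel_iff' := by
    intro a b
    simp [Prod.le_def, Subtype.coe_le_coe]
    exact ⟨fun h => h.1, fun h => ⟨h, le_rfl⟩⟩

@[simp] lemma iccProdBotIso_coe {α β : Type*} [PartialOrder α] [PartialOrder β] [OrderBot β]
    (x z : α) (a : Set.Icc x z) : ((iccProdBotIso (β := β) x z) a : α × β) = ((a : α), ⊥) := rfl

section transfer
variable {α β : Type*} [PartialOrder α] [PartialOrder β]

lemma transfer_connected {x z : α} {x' z' : β}
    (e : Set.Icc x z ≃o Set.Icc x' z')
    (hx : ∀ a : Set.Icc x z, (a : α) = x ↔ ((e a : β) = x'))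
    (hz : ∀ a : Set.Icc x z, (a : α) = z ↔ ((e a : β) = z'))
    (H : (∃ c : Set (Set.Icc x' z'), IsMaxChain (· ≤ ·) c ∧ 4 ≤ c.ncard) →
      ∀ F G : Set.Icc x' z', (F : β) ≠ x' → (F : β) ≠ z' → (G : β) ≠ x' → (G : β) ≠ z' →
        Relation.ReflTransGen
          (fun a b : Set.Icc x' z' =>
            ((a : β) ≠ x' ∧ (a : β) ≠ z' ∧ (b : β) ≠ x' ∧ (b : β) ≠ z') ∧
              ((a : β) ≤ (b : β) ∨ (b : β) ≤ (a : β))) F G) :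
    (∃ c : Set (Set.Icc x z), IsMaxChain (· ≤ ·) c ∧ 4 ≤ c.ncard) →
      ∀ F G : Set.Icc x z, (F : α) ≠ x → (F : α) ≠ z → (G : α) ≠ x → (G : α) ≠ z →
        Relation.ReflTransGen
          (fun a b : Set.Icc x z =>
            ((a : α) ≠ x ∧ (a : α) ≠ z ∧ (b : α) ≠ x ∧ (b : α) ≠ z) ∧
              ((a : α) ≤ (b : α) ∨ (b : α) ≤ (a : α))) F G := by
  rintro ⟨c, hc, hc4⟩ F G hF1 hF2 hG1 hG2
  have Hc : ∃ c' : Set (Set.Icc x' z'), IsMaxChain (· ≤ ·) c' ∧ 4 ≤ c'.ncard :=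
    ⟨e '' c, isMaxChain_image_s4 e hc, by rwa [Set.ncard_image_of_injective _ e.injective]⟩
  have hR := H Hc (e F) (e G) (fun h => hF1 ((hx F).mpr h)) (fun h => hF2 ((hz F).mpr h))
    (fun h => hG1 ((hx G).mpr h)) (fun h => hG2 ((hz G).mpr h))
  have lift := Relation.ReflTransGen.lift (r := fun a b : Set.Icc x' z' =>
            ((a : β) ≠ x' ∧ (a : β) ≠ z' ∧ (b : β) ≠ x' ∧ (b : β) ≠ z') ∧
              ((a : β) ≤ (b : β) ∨ (b : β) ≤ (a : β)))
    (p := fun a b : Set.Icc x z =>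
            ((a : α) ≠ x ∧ (a : α) ≠ z ∧ (b : α) ≠ x ∧ (b : α) ≠ z) ∧
              ((a : α) ≤ (b : α) ∨ (b : α) ≤ (a : α)))
    e.symm ?_ _ _ hR
  · simpa [Function.onFun] using lift
  · rintro a b ⟨⟨h1, h2, h3, h4⟩, h5⟩
    refine ⟨⟨?_, ?_, ?_, ?_⟩, ?_⟩
    · intro h; apply h1; have := (hx (e.symm a)).mp h; simpa using this
    · intro h; apply h2; have := (hz (e.symm a)).mp h; simpa using this
    · intro h; apply h3; have := (hx (e.symm b)).mp h; simpa using this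
    · intro h; apply h4; have := (hz (e.symm b)).mp h; simpa using this
    · rcases h5 with h5 | h5
      · exact Or.inl (Subtype.coe_le_coe.mpr (e.symm.monotone (Subtype.coe_le_coe.mp h5)))
      · exact Or.inr (Subtype.coe_le_coe.mpr (e.symm.monotone (Subtype.coe_le_coe.mp h5)))

lemma transfer_diamond {x z : α} {x' z' : β}
    (e : Set.Icc x z ≃o Set.Icc x' z')
    (hx : ∀ a : Set.Icc x z, (a : α) = x ↔ ((e a : β) = x'))
    (hz : ∀ a : Set.Icc x z, (a : α) = z ↔ ((e a : β) = z'))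
    (H : (∀ c : Set (Set.Icc x' z'), IsMaxChain (· ≤ ·) c → c.ncard = 4) →
        {y : β | x' < y ∧ y < z'}.ncard = 2) :
    (∀ c : Set (Set.Icc x z), IsMaxChain (· ≤ ·) c → c.ncard = 4) →
      {y : α | x < y ∧ y < z}.ncard = 2 := by
  intro hα
  have h4 : ∀ c : Set (Set.Icc x' z'), IsMaxChain (· ≤ ·) c → c.ncard = 4 := by
    intro c hc
    have := hα (e.symm '' c) (isMaxChain_image_s4 e.symm hc)
    rwa [Set.ncard_image_of_injective _ e.symm.injective] at this
  have h2 := H h4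
  have eq1 : {y : α | x < y ∧ y < z}
      = Subtype.val '' {a : Set.Icc x z | (a : α) ≠ x ∧ (a : α) ≠ z} := by
    ext y
    constructor
    · rintro ⟨hy1, hy2⟩
      exact ⟨⟨y, ⟨hy1.le, hy2.le⟩⟩, ⟨hy1.ne', hy2.ne⟩, rfl⟩
    · rintro ⟨a, ⟨ha1, ha2⟩, rfl⟩
      exact ⟨lt_of_le_of_ne a.2.1 (Ne.symm ha1), lt_of_le_of_ne a.2.2 ha2⟩
  have eq2 : {y : β | x' < y ∧ y < z'}
      = Subtype.val '' {b : Set.Icc x' z' | (b : β) ≠ x' ∧ (b : β) ≠ z'} := by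
    ext y
    constructor
    · rintro ⟨hy1, hy2⟩
      exact ⟨⟨y, ⟨hy1.le, hy2.le⟩⟩, ⟨hy1.ne', hy2.ne⟩, rfl⟩
    · rintro ⟨a, ⟨ha1, ha2⟩, rfl⟩
      exact ⟨lt_of_le_of_ne a.2.1 (Ne.symm ha1), lt_of_le_of_ne a.2.2 ha2⟩
  have eq3 : e '' {a : Set.Icc x z | (a : α) ≠ x ∧ (a : α) ≠ z}
      = {b : Set.Icc x' z' | (b : β) ≠ x' ∧ (b : β) ≠ z'} := by
    ext b
    constructor
    · rintro ⟨a, ⟨ha1, ha2⟩, rfl⟩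
      exact ⟨fun h => ha1 ((hx a).mpr h), fun h => ha2 ((hz a).mpr h)⟩
    · rintro ⟨hb1, hb2⟩
      refine ⟨e.symm b, ⟨?_, ?_⟩, e.apply_symm_apply b⟩
      · intro h; apply hb1; have := (hx (e.symm b)).mp h; simpa using this
      · intro h; apply hb2; have := (hz (e.symm b)).mp h; simpa using this
  rw [eq1, Set.ncard_image_of_injective _ Subtype.val_injective]
  rw [eq2, Set.ncard_image_of_injective _ Subtype.val_injective] at h2
  rw [← eq3, Set.ncard_image_of_injective _ e.injective] at h2
  exact h2

end transfer

lemma IsAbstractPolytope.congr {α β : Type*} [PartialOrder α] [OrderBot α]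
    [PartialOrder β] [OrderBot β] {n : ℤ} (e : α ≃o β)
    (h : IsAbstractPolytope α n) : IsAbstractPolytope β n := by
  constructor
  · exact h.neg_one_le
  · obtain ⟨t, ht⟩ := h.exists_top
    refine ⟨e t, fun b => ?_⟩
    simpa using e.monotone (ht (e.symm b))
  · intro s hs
    have := h.maxChain_card (e.symm '' s) (isMaxChain_image_s4 e.symm hs)
    rwa [Set.ncard_image_of_injective _ e.symm.injective] at this
  · intro x' z' hxz'
    obtain ⟨x, rfl⟩ : ∃ x, e x = x' := ⟨e.symm x', e.apply_symm_apply _⟩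
    obtain ⟨z, rfl⟩ : ∃ z, e z = z' := ⟨e.symm z', e.apply_symm_apply _⟩
    exact transfer_connected (e.iccCongr x z).symm
      (fun a => by simp [OrderIso.symm_apply_eq]) (fun a => by simp [OrderIso.symm_apply_eq])
      (h.connected x z (e.le_iff_le.mp hxz'))
  · intro x' z' hxz'
    obtain ⟨x, rfl⟩ : ∃ x, e x = x' := ⟨e.symm x', e.apply_symm_apply _⟩
    obtain ⟨z, rfl⟩ : ∃ z, e z = z' := ⟨e.symm z', e.apply_symm_apply _⟩
    exact transfer_diamond (e.iccCongr x z).symm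
      (fun a => by simp [OrderIso.symm_apply_eq]) (fun a => by simp [OrderIso.symm_apply_eq])
      (h.diamond x z (e.lt_iff_lt.mp hxz'))

set_option linter.unusedSectionVars false
section prodfactor
variable {A B : Type*} [PartialOrder A] [OrderBot A] [PartialOrder B] [OrderBot B]

lemma isMaxChain_prodChain {sA : Set A} {sB : Set B} {t : A} (ht : IsTop t)
    (hA : IsMaxChain (· ≤ ·) sA) (hB : IsMaxChain (· ≤ ·) sB) :
    IsMaxChain (· ≤ ·)
      ((fun x : A => (x, (⊥:B))) '' sA ∪ (fun y : B => (t, y)) '' sB) := by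
  constructor
  · rintro p (⟨x, hx, rfl⟩ | ⟨y, hy, rfl⟩) q (⟨x', hx', rfl⟩ | ⟨y', hy', rfl⟩) hne
    · rcases hA.1 hx hx' (fun h => hne (by rw [h])) with h | h
      · exact Or.inl ⟨h, le_rfl⟩
      · exact Or.inr ⟨h, le_rfl⟩
    · exact Or.inl ⟨ht x, bot_le⟩
    · exact Or.inr ⟨ht x', bot_le⟩
    · rcases hB.1 hy hy' (fun h => hne (by rw [h])) with h | h
      · exact Or.inl ⟨le_rfl, h⟩
      · exact Or.inr ⟨le_rfl, h⟩
  · intro u hu hsub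
    refine Set.Subset.antisymm hsub ?_
    intro p hp
    have hbB : ⊥ ∈ sB := bot_mem_of_isMaxChain hB
    have htA : t ∈ sA := top_mem_of_isMaxChain ht hA
    have htb : ((t, (⊥:B)) : A × B) ∈ u := hsub (Or.inl ⟨t, htA, rfl⟩)
    by_cases hpt : p = (t, ⊥)
    · exact hpt ▸ Or.inl ⟨t, htA, rfl⟩
    rcases hu hp htb hpt with hle | hge
    · -- p ≤ (t, ⊥), so p = (p.1, ⊥) and p.1 comparable with sA
      have hp2 : p.2 = ⊥ := le_antisymm hle.2 bot_le
      have hcmp : ∀ b ∈ sA, p.1 ≠ b → p.1 ≤ b ∨ b ≤ p.1 := by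
        intro b hb hneb
        have hbu : ((b, (⊥:B)) : A × B) ∈ u := hsub (Or.inl ⟨b, hb, rfl⟩)
        have hpb : p ≠ (b, ⊥) := by
          intro hh; exact hneb (by rw [hh])
        rcases hu hp hbu hpb with h | h
        · exact Or.inl h.1
        · exact Or.inr h.1
      have : sA = insert p.1 sA := hA.2 (hA.1.insert hcmp) (Set.subset_insert _ _)
      have hp1 : p.1 ∈ sA := by rw [this]; exact Set.mem_insert _ _
      exact Or.inl ⟨p.1, hp1, by rw [← hp2]⟩
    · -- (t,⊥) ≤ p, so p.1 = t and p.2 comparable with sB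
      have hp1 : p.1 = t := le_antisymm (ht p.1) hge.1
      have hcmp : ∀ b ∈ sB, p.2 ≠ b → p.2 ≤ b ∨ b ≤ p.2 := by
        intro b hb hneb
        have hbu : ((t, b) : A × B) ∈ u := hsub (Or.inr ⟨b, hb, rfl⟩)
        have hpb : p ≠ (t, b) := by
          intro hh; exact hneb (by rw [hh])
        rcases hu hp hbu hpb with h | h
        · exact Or.inl h.2
        · exact Or.inr h.2
      have : sB = insert p.2 sB := hB.2 (hB.1.insert hcmp) (Set.subset_insert _ _)
      have hp2 : p.2 ∈ sB := by rw [this]; exact Set.mem_insert _ _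
      exact Or.inr ⟨p.2, hp2, by rw [← hp1]⟩

lemma prodChain_ncard {sA : Set A} {sB : Set B} {t : A} (htA : t ∈ sA) (hbB : ⊥ ∈ sB)
    (hfA : sA.Finite) (hfB : sB.Finite) :
    ((fun x : A => (x, (⊥:B))) '' sA ∪ (fun y : B => (t, y)) '' sB).ncard + 1
      = sA.ncard + sB.ncard := by
  have hinjA : Function.Injective (fun x : A => (x, (⊥:B))) := fun a b hab => congrArg Prod.fst hab
  have hinjB : Function.Injective (fun y : B => (t, y)) := fun a b hab => congrArg Prod.snd hab
  have hint : ((fun x : A => (x, (⊥:B))) '' sA ∩ (fun y : B => (t, y)) '' sB) = {(t, ⊥)} := by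
    ext p
    constructor
    · rintro ⟨⟨x, hx, rfl⟩, ⟨y, hy, hyy⟩⟩
      have h1 : t = x := congrArg Prod.fst hyy
      simp [← h1]
    · rintro rfl
      exact ⟨⟨t, htA, rfl⟩, ⟨⊥, hbB, rfl⟩⟩
  have := Set.ncard_union_add_ncard_inter ((fun x : A => (x, (⊥:B))) '' sA)
    ((fun y : B => (t, y)) '' sB) (hfA.image _) (hfB.image _)
  rw [hint, Set.ncard_singleton, Set.ncard_image_of_injective _ hinjA,
    Set.ncard_image_of_injective _ hinjB] at this
  exact this

lemma factor_fst {n : ℤ} (h : IsAbstractPolytope (A × B) n) :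
    ∃ a : ℤ, IsAbstractPolytope A a := by
  obtain ⟨tab, htab⟩ := h.exists_top
  have htA : IsTop tab.1 := fun x => (htab (x, tab.2)).1
  have hchB : IsChain (· ≤ ·) (∅ : Set B) := Set.pairwise_empty _
  obtain ⟨sB, hsB, -⟩ := hchB.exists_maxChain
  have hchA : IsChain (· ≤ ·) (∅ : Set A) := Set.pairwise_empty _
  obtain ⟨sA₀, hsA₀, -⟩ := hchA.exists_maxChain
  have hpos : 1 ≤ (n + 2).toNat := by have := h.neg_one_le; omega
  -- for each maximal chain sA of A we get the counting identity
  have key : ∀ sA : Set A, IsMaxChain (· ≤ ·) sA →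
      sA.Finite ∧ sB.Finite ∧ sA.ncard + sB.ncard = (n + 2).toNat + 1 := by
    intro sA hsA
    set C := (fun x : A => (x, (⊥:B))) '' sA ∪ (fun y : B => (tab.1, y)) '' sB with hC
    have hmax : IsMaxChain (· ≤ ·) C := isMaxChain_prodChain htA hsA hsB
    have hcard : C.ncard = (n + 2).toNat := h.maxChain_card C hmax
    have hfinC : C.Finite := by
      by_contra hinf
      rw [Set.Infinite.ncard hinf] at hcard
      omega
    have hfA : sA.Finite := by
      have : ((fun x : A => (x, (⊥:B))) '' sA).Finite :=
        hfinC.subset Set.subset_union_left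
      exact Set.Finite.of_finite_image this
        (Function.Injective.injOn (fun a b hab => congrArg Prod.fst hab))
    have hfB : sB.Finite := by
      have : ((fun y : B => (tab.1, y)) '' sB).Finite :=
        hfinC.subset Set.subset_union_right
      exact Set.Finite.of_finite_image this
        (Function.Injective.injOn (fun a b hab => congrArg Prod.snd hab))
    have := prodChain_ncard (top_mem_of_isMaxChain htA hsA) (bot_mem_of_isMaxChain hsB) hfA hfB
    rw [← hC] at this
    rw [hcard] at this
    exact ⟨hfA, hfB, by omega⟩
  obtain ⟨hfA₀, hfB, hcard₀⟩ := key sA₀ hsA₀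
  have hA₀pos : 1 ≤ sA₀.ncard := by
    have : sA₀.Nonempty := ⟨⊥, bot_mem_of_isMaxChain hsA₀⟩
    have := (Set.ncard_pos hfA₀).mpr this
    omega
  refine ⟨(sA₀.ncard : ℤ) - 2, ?_, ⟨tab.1, htA⟩, ?_, ?_, ?_⟩
  · omega
  · intro s hs
    obtain ⟨-, -, hcard⟩ := key s hs
    omega
  · intro x z hxz hc4
    exact transfer_connected (iccProdBotIso x z)
      (fun a => by simp [Prod.ext_iff]) (fun a => by simp [Prod.ext_iff])
      (h.connected (x, ⊥) (z, ⊥) ⟨hxz, le_rfl⟩) hc4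
  · intro x z hxz
    have hxz' : ((x, (⊥:B)) : A × B) < (z, ⊥) := by
      refine lt_of_le_of_ne ⟨hxz.le, le_rfl⟩ ?_
      simp [Prod.ext_iff]
      exact hxz.ne
    exact transfer_diamond (iccProdBotIso x z)
      (fun a => by simp [Prod.ext_iff]) (fun a => by simp [Prod.ext_iff])
      (h.diamond (x, ⊥) (z, ⊥) hxz')

lemma factor_snd {n : ℤ} (h : IsAbstractPolytope (A × B) n) :
    ∃ b : ℤ, IsAbstractPolytope B b :=
  factor_fst (h.congr OrderIso.prodComm)

lemma rank_eq_of_prod {a b n : ℤ} (hA : IsAbstractPolytope A a) (hB : IsAbstractPolytope B b)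
    (h : IsAbstractPolytope (A × B) n) :
    (a + 2).toNat + (b + 2).toNat = (n + 2).toNat + 1 := by
  obtain ⟨tab, htab⟩ := h.exists_top
  have htA : IsTop tab.1 := fun x => (htab (x, tab.2)).1
  have hchB : IsChain (· ≤ ·) (∅ : Set B) := Set.pairwise_empty _
  obtain ⟨sB, hsB, -⟩ := hchB.exists_maxChain
  have hchA : IsChain (· ≤ ·) (∅ : Set A) := Set.pairwise_empty _
  obtain ⟨sA, hsA, -⟩ := hchA.exists_maxChain
  have hcA : sA.ncard = (a + 2).toNat := hA.maxChain_card sA hsA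
  have hcB : sB.ncard = (b + 2).toNat := hB.maxChain_card sB hsB
  have hmax := isMaxChain_prodChain htA hsA hsB
  have hcard := h.maxChain_card _ hmax
  have hposA : 1 ≤ (a + 2).toNat := by have := hA.neg_one_le; omega
  have hposB : 1 ≤ (b + 2).toNat := by have := hB.neg_one_le; omega
  have hfA : sA.Finite := by
    by_contra hinf
    rw [Set.Infinite.ncard hinf] at hcA
    omega
  have hfB : sB.Finite := by
    by_contra hinf
    rw [Set.Infinite.ncard hinf] at hcB
    omega
  have := prodChain_ncard (top_mem_of_isMaxChain htA hsA) (bot_mem_of_isMaxChain hsB) hfA hfB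
  omega

end prodfactor

section utils
variable {α β γ δ : Type*} [Preorder α] [Preorder β] [Preorder γ] [Preorder δ]

/-- Product of two order isomorphisms. -/
def OrderIso.prodCongr' (e : α ≃o β) (f : γ ≃o δ) : α × γ ≃o β × δ where
  toEquiv := e.toEquiv.prodCongr f.toEquiv
  map_rel_iff' := by
    intro a b
    simp [Prod.le_def, e.le_iff_le, f.le_iff_le]

/-- Associativity of products as an order isomorphism. -/
def OrderIso.prodAssoc' : (α × β) × γ ≃o α × β × γ where
  toEquiv := Equiv.prodAssoc α β γ
  map_rel_iff' := by
    intro a b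
    simp [Prod.le_def, Equiv.prodAssoc, and_assoc]

end utils

instance iicOrderBot {α : Type*} [PartialOrder α] [OrderBot α] (a : α) :
    OrderBot (Set.Iic a) where
  bot := ⟨⊥, bot_le⟩
  bot_le x := by exact bot_le (a := (x : α))

lemma isAbstractPolytope_neg_one_of_subsingleton {Z : Type*} [PartialOrder Z] [OrderBot Z]
    [Subsingleton Z] : IsAbstractPolytope Z (-1) := by
  constructor
  · norm_num
  · exact ⟨⊥, fun x => le_of_eq (Subsingleton.elim x ⊥)⟩
  · intro s hs
    have hb : ⊥ ∈ s := bot_mem_of_isMaxChain hs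
    have hsub : s = {⊥} := Set.Subset.antisymm
      (fun x _ => by simp [Subsingleton.elim x (⊥ : Z)]) (by simpa using hb)
    rw [hsub]; simp
  · intro x z _ _ F _ hF1 _ _ _
    exact absurd (Subsingleton.elim (F : Z) x) hF1
  · intro x z hxz
    exact absurd (Subsingleton.elim x z) hxz.ne

lemma eq_bot_of_rank_neg {Z : Type*} [PartialOrder Z] [OrderBot Z] {k : ℤ}
    (h : IsAbstractPolytope Z k) (hk : k < 0) (x : Z) : x = ⊥ := by
  have hchain : IsChain (· ≤ ·) ({⊥, x} : Set Z) := by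
    intro p hp q hq _
    rcases hp with rfl | hp <;> rcases hq with rfl | hq
    · exact Or.inl le_rfl
    · simp at hq; subst hq; exact Or.inl bot_le
    · simp at hp; subst hp; exact Or.inr bot_le
    · simp at hp hq; subst hp; subst hq; exact Or.inl le_rfl
  obtain ⟨s, hs, hsub⟩ := hchain.exists_maxChain
  have hcard := h.maxChain_card s hs
  have h1 : (k + 2).toNat = 1 := by have := h.neg_one_le; omega
  rw [h1] at hcard
  obtain ⟨a, ha⟩ := Set.ncard_eq_one.mp hcard
  have hb : ⊥ ∈ s := hsub (by simp)
  have hx : x ∈ s := hsub (by simp)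
  rw [ha] at hb hx
  simp at hb hx
  rw [hx, ← hb]

/-- `X ≃o X × [⊥,⊥]`, the trivial factorization by a point. -/
def prodIicBotIso (X : Type*) [PartialOrder X] [OrderBot X] :
    X ≃o X × (Set.Iic (⊥ : X)) where
  toFun x := (x, ⟨⊥, le_rfl⟩)
  invFun p := p.1
  left_inv x := rfl
  right_inv p := by
    have : (⟨⊥, le_rfl⟩ : Set.Iic (⊥ : X)) = p.2 :=
      Subtype.ext (le_antisymm p.2.2 bot_le).symm
    rw [Prod.ext_iff]
    exact ⟨rfl, this⟩
  map_rel_iff' := by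
    intro x y
    simp [Prod.le_def]

instance iicBotSubsingleton {X : Type*} [PartialOrder X] [OrderBot X] :
    Subsingleton (Set.Iic (⊥ : X)) :=
  ⟨fun a b => Subtype.ext (by rw [le_antisymm a.2 bot_le, le_antisymm b.2 bot_le])⟩

lemma exists_prime_factor :
    ∀ K : ℕ, ∀ (X : Type u) [PartialOrder X] [OrderBot X], ∀ k : ℤ,
      IsAbstractPolytope X k → 0 ≤ k → (k + 2).toNat ≤ K →
      ∃ R : BddPoset.{u}, (∃ r : ℤ, 0 ≤ r ∧ IsAbstractPolytope R.carrier r) ∧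
        JoinPrime R.carrier ∧ JoinFactor R X := by
  intro K
  induction K using Nat.strong_induction_on with
  | _ K IH =>
    intro X _ _ k hX hk hK
    by_cases hprime : JoinPrime X
    · refine ⟨BddPoset.mk X, ⟨k, hk, hX⟩, hprime,
        ⟨BddPoset.mk (Set.Iic (⊥ : X)), ⟨-1, isAbstractPolytope_neg_one_of_subsingleton⟩,
          ⟨prodIicBotIso X⟩⟩⟩
    · rw [JoinPrime, not_not] at hprime
      obtain ⟨A, B, a, b, ha, hb, hAp, hBp, ⟨e⟩⟩ := hprime
      have hAB : IsAbstractPolytope (A.carrier × B.carrier) k := hX.congr e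
      have hsum := rank_eq_of_prod hAp hBp hAB
      have hb2 : 2 ≤ (b + 2).toNat := by omega
      have hk2 : (k + 2).toNat ≤ K := hK
      have hlt : (a + 2).toNat < K := by omega
      obtain ⟨R, hR, hRprime, ⟨S, hS, ⟨eA⟩⟩⟩ := IH ((a + 2).toNat) hlt A.carrier a hAp ha le_rfl
      have e2 : X ≃o R.carrier × (S.carrier × B.carrier) :=
        e.trans ((OrderIso.prodCongr' eA (OrderIso.refl _)).trans OrderIso.prodAssoc')
      obtain ⟨t, hT⟩ := factor_snd (hX.congr e2)
      exact ⟨R, hR, hRprime, ⟨BddPoset.mk (S.carrier × B.carrier), ⟨t, hT⟩, ⟨e2⟩⟩⟩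

section glbpair
variable {α β : Type*} [Preorder α] [Preorder β]

lemma isGLB_pair_fst {x y w : α × β} (h : IsGLB {x, y} w) : IsGLB {x.1, y.1} w.1 := by
  constructor
  · rintro q (rfl | hq)
    · exact (h.1 (Set.mem_insert _ _)).1
    · simp at hq; rw [hq]; exact (h.1 (by simp)).1
  · intro l hl
    have hlx : l ≤ x.1 := hl (Set.mem_insert _ _)
    have hly : l ≤ y.1 := hl (by simp)
    have : (l, w.2) ≤ w := h.2 (by
      rintro q (rfl | hq)
      · exact ⟨hlx, (h.1 (Set.mem_insert _ _)).2⟩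
      · simp at hq; rw [hq]; exact ⟨hly, (h.1 (by simp)).2⟩)
    exact this.1

lemma isGLB_pair_snd {x y w : α × β} (h : IsGLB {x, y} w) : IsGLB {x.2, y.2} w.2 := by
  constructor
  · rintro q (rfl | hq)
    · exact (h.1 (Set.mem_insert _ _)).2
    · simp at hq; rw [hq]; exact (h.1 (by simp)).2
  · intro l hl
    have hlx : l ≤ x.2 := hl (Set.mem_insert _ _)
    have hly : l ≤ y.2 := hl (by simp)
    have : (w.1, l) ≤ w := h.2 (by
      rintro q (rfl | hq)
      · exact ⟨(h.1 (Set.mem_insert _ _)).1, hlx⟩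
      · simp at hq; rw [hq]; exact ⟨(h.1 (by simp)).1, hly⟩)
    exact this.2

end glbpair

lemma key_snd_bot {P Q : Type u} [PartialOrder P] [OrderBot P] [PartialOrder Q] [OrderBot Q]
    {m n : ℤ} (hP : IsAbstractPolytope P m) (hQ : IsAbstractPolytope Q n)
    (h : JoinRelPrime P Q) {t₁ : P} (ht₁ : IsTop t₁)
    (φ : (P × Q) ≃o (P × Q)) : (φ (t₁, ⊥)).2 = ⊥ := by
  obtain ⟨t₂, ht₂⟩ := hQ.exists_top
  rcases hcd : φ (t₁, ⊥) with ⟨c, d⟩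
  rcases hcd' : φ (⊥, t₂) with ⟨c', d'⟩
  show d = ⊥
  -- basic GLB facts
  have glbA : ∀ w : P × Q, IsGLB {w, ((t₁, ⊥) : P × Q)} (w.1, ⊥) := by
    intro w
    constructor
    · rintro q (rfl | hq)
      · exact ⟨le_rfl, bot_le⟩
      · simp only [Set.mem_singleton_iff] at hq; rw [hq]; exact ⟨ht₁ w.1, le_rfl⟩
    · intro l hl
      have h1 := hl (Set.mem_insert _ _)
      have h2 := hl (Set.mem_insert_of_mem _ rfl)
      exact ⟨h1.1, h2.2⟩
  have glbB : ∀ w : P × Q, IsGLB {w, ((⊥, t₂) : P × Q)} (⊥, w.2) := by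
    intro w
    constructor
    · rintro q (rfl | hq)
      · exact ⟨bot_le, le_rfl⟩
      · simp only [Set.mem_singleton_iff] at hq; rw [hq]; exact ⟨le_rfl, ht₂ w.2⟩
    · intro l hl
      have h1 := hl (Set.mem_insert _ _)
      have h2 := hl (Set.mem_insert_of_mem _ rfl)
      exact ⟨h2.1, h1.2⟩
  have glbCD : ∀ x : P × Q, IsGLB {x, ((c, d) : P × Q)} (φ ((φ.symm x).1, ⊥)) := by
    intro x
    have h2 := (φ.isGLB_image').mpr (glbA (φ.symm x))
    rwa [Set.image_pair, φ.apply_symm_apply, hcd] at h2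
  have glbCD' : ∀ x : P × Q, IsGLB {x, ((c', d') : P × Q)} (φ (⊥, (φ.symm x).2)) := by
    intro x
    have h2 := (φ.isGLB_image').mpr (glbB (φ.symm x))
    rwa [Set.image_pair, φ.apply_symm_apply, hcd'] at h2
  have glbD : ∀ x : P × Q, IsGLB {x.2, d} ((φ ((φ.symm x).1, ⊥)).2) :=
    fun x => isGLB_pair_snd (glbCD x)
  have glbD' : ∀ x : P × Q, IsGLB {x.2, d'} ((φ (⊥, (φ.symm x).2)).2) :=
    fun x => isGLB_pair_snd (glbCD' x)
  set f₂ : Q → Q := fun q => (φ ((φ.symm (⊥, q)).1, ⊥)).2 with hf₂def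
  set g₂ : Q → Q := fun q => (φ (⊥, (φ.symm (⊥, q)).2)).2 with hg₂def
  have hf₂ : ∀ q, IsGLB {q, d} (f₂ q) := fun q => glbD (⊥, q)
  have hg₂ : ∀ q, IsGLB {q, d'} (g₂ q) := fun q => glbD' (⊥, q)
  have hf₂x : ∀ x : P × Q, (φ ((φ.symm x).1, ⊥)).2 = f₂ x.2 :=
    fun x => (glbD x).unique (hf₂ x.2)
  have hg₂x : ∀ x : P × Q, (φ (⊥, (φ.symm x).2)).2 = g₂ x.2 :=
    fun x => (glbD' x).unique (hg₂ x.2)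
  have hf₂le : ∀ q, f₂ q ≤ d := fun q => (hf₂ q).1 (by simp)
  have hg₂le : ∀ q, g₂ q ≤ d' := fun q => (hg₂ q).1 (by simp)
  have hf₂q : ∀ q, f₂ q ≤ q := fun q => (hf₂ q).1 (Set.mem_insert _ _)
  have hg₂q : ∀ q, g₂ q ≤ q := fun q => (hg₂ q).1 (Set.mem_insert _ _)
  have hf₂mono : ∀ {q q' : Q}, q ≤ q' → f₂ q ≤ f₂ q' := by
    intro q q' hqq
    refine (hf₂ q').2 ?_
    rintro r (rfl | hr)
    · exact (hf₂q q).trans hqq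
    · simp only [Set.mem_singleton_iff] at hr; rw [hr]; exact hf₂le q
  have hg₂mono : ∀ {q q' : Q}, q ≤ q' → g₂ q ≤ g₂ q' := by
    intro q q' hqq
    refine (hg₂ q').2 ?_
    rintro r (rfl | hr)
    · exact (hg₂q q).trans hqq
    · simp only [Set.mem_singleton_iff] at hr; rw [hr]; exact hg₂le q
  -- the first coordinates of the auxiliary images are ⊥
  have hbotglb : ∀ u : P, IsGLB ({(⊥ : P), u} : Set P) ⊥ := by
    intro u
    constructor
    · rintro r (rfl | hr)
      · exact le_rfl
      · exact bot_le
    · intro l hl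
      exact hl (Set.mem_insert _ _)
  have hfst : ∀ q : Q, (φ ((φ.symm (⊥, q)).1, ⊥)).1 = ⊥ := by
    intro q
    have h1 := isGLB_pair_fst (glbCD (⊥, q))
    have h2 : IsGLB ({(⊥ : P), c} : Set P) ⊥ := hbotglb c
    exact h1.unique h2
  have hfst' : ∀ q : Q, (φ (⊥, (φ.symm (⊥, q)).2)).1 = ⊥ := by
    intro q
    have h1 := isGLB_pair_fst (glbCD' (⊥, q))
    have h2 : IsGLB ({(⊥ : P), c'} : Set P) ⊥ := hbotglb c'
    exact h1.unique h2
  have hφy : ∀ q : Q, φ ((φ.symm (⊥, q)).1, ⊥) = (⊥, f₂ q) :=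
    fun q => Prod.ext (hfst q) rfl
  have hφy' : ∀ q : Q, φ (⊥, (φ.symm (⊥, q)).2) = (⊥, g₂ q) :=
    fun q => Prod.ext (hfst' q) rfl
  have hreflect : ∀ q q' : Q, f₂ q ≤ f₂ q' → g₂ q ≤ g₂ q' → q ≤ q' := by
    intro q q' h1 h2
    have e1 : φ ((φ.symm (⊥, q)).1, ⊥) ≤ φ ((φ.symm (⊥, q')).1, ⊥) := by
      rw [hφy q, hφy q']; exact ⟨le_rfl, h1⟩
    have e2 : φ (⊥, (φ.symm (⊥, q)).2) ≤ φ (⊥, (φ.symm (⊥, q')).2) := by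
      rw [hφy' q, hφy' q']; exact ⟨le_rfl, h2⟩
    have f1 : (φ.symm (⊥, q)).1 ≤ (φ.symm (⊥, q')).1 := (φ.le_iff_le.mp e1).1
    have f2 : (φ.symm (⊥, q)).2 ≤ (φ.symm (⊥, q')).2 := (φ.le_iff_le.mp e2).2
    have h3 : φ.symm (⊥, q) ≤ φ.symm (⊥, q') := ⟨f1, f2⟩
    exact (φ.symm.le_iff_le.mp h3).2
  have hsurj : ∀ r s : Q, r ≤ d → s ≤ d' → ∃ q : Q, f₂ q = r ∧ g₂ q = s := by
    intro r s hr hs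
    have h1 : ((⊥, r) : P × Q) ≤ (c, d) := ⟨bot_le, hr⟩
    have h2 : ((⊥, s) : P × Q) ≤ (c', d') := ⟨bot_le, hs⟩
    rw [← hcd] at h1
    rw [← hcd'] at h2
    have h3 : φ.symm (⊥, r) ≤ (t₁, ⊥) := by
      have := φ.symm.monotone h1; rwa [φ.symm_apply_apply] at this
    have h4 : φ.symm (⊥, s) ≤ (⊥, t₂) := by
      have := φ.symm.monotone h2; rwa [φ.symm_apply_apply] at this
    have h5 : (φ.symm (⊥, r)).2 = ⊥ := le_antisymm h3.2 bot_le
    have h6 : (φ.symm (⊥, s)).1 = ⊥ := le_antisymm h4.1 bot_le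
    set x : P × Q := φ ((φ.symm (⊥, r)).1, (φ.symm (⊥, s)).2) with hx
    have hxs : φ.symm x = ((φ.symm (⊥, r)).1, (φ.symm (⊥, s)).2) := by
      rw [hx, φ.symm_apply_apply]
    refine ⟨x.2, ?_, ?_⟩
    · rw [← hf₂x x, hxs]
      show (φ ((φ.symm (⊥, r)).1, ⊥)).2 = r
      have heq : ((φ.symm (⊥, r)).1, (⊥ : Q)) = φ.symm (⊥, r) := Prod.ext rfl h5.symm
      rw [heq, φ.apply_symm_apply]
    · rw [← hg₂x x, hxs]
      show (φ (⊥, (φ.symm (⊥, s)).2)).2 = s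
      have heq : ((⊥ : P), (φ.symm (⊥, s)).2) = φ.symm (⊥, s) := Prod.ext h6.symm rfl
      rw [heq, φ.apply_symm_apply]
  -- the splitting order isomorphism Q ≃o [⊥,d] × [⊥,d']
  let Gfun : Q → (Set.Iic d) × (Set.Iic d') := fun q => (⟨f₂ q, hf₂le q⟩, ⟨g₂ q, hg₂le q⟩)
  have hGinj : Function.Injective Gfun := by
    intro q q' hqq
    have h1 : f₂ q = f₂ q' := congrArg (fun p : (Set.Iic d) × (Set.Iic d') => (p.1 : Q)) hqq
    have h2 : g₂ q = g₂ q' := congrArg (fun p : (Set.Iic d) × (Set.Iic d') => (p.2 : Q)) hqq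
    exact le_antisymm (hreflect _ _ h1.le h2.le) (hreflect _ _ h1.ge h2.ge)
  have hGsurj : Function.Surjective Gfun := by
    rintro ⟨⟨r, hr⟩, ⟨s, hs⟩⟩
    obtain ⟨q, hq1, hq2⟩ := hsurj r s hr hs
    exact ⟨q, Prod.ext (Subtype.ext hq1) (Subtype.ext hq2)⟩
  let G : Q ≃o (Set.Iic d) × (Set.Iic d') :=
    { toEquiv := Equiv.ofBijective Gfun ⟨hGinj, hGsurj⟩
      map_rel_iff' := by
        intro q q'
        constructor
        · intro hle
          exact hreflect q q' hle.1 hle.2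
        · intro hle
          exact ⟨hf₂mono hle, hg₂mono hle⟩ }
  -- [⊥,d] is an abstract polytope
  by_contra hdne
  have hQpoly : IsAbstractPolytope ((Set.Iic d) × (Set.Iic d')) n := hQ.congr G
  obtain ⟨kd, hkd⟩ := factor_fst hQpoly
  have hkd0 : 0 ≤ kd := by
    by_contra hneg
    push_neg at hneg
    have hb := eq_bot_of_rank_neg hkd hneg (⟨d, le_rfl⟩ : Set.Iic d)
    exact hdne (congrArg Subtype.val hb)
  obtain ⟨R, hR, hRprime, ⟨S, hS, ⟨eR⟩⟩⟩ :=
    exists_prime_factor ((kd + 2).toNat) (Set.Iic d) kd hkd hkd0 le_rfl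
  -- direct isomorphism P ≃o [⊥,c] × [⊥,d]
  have hble : ∀ u : P, φ (u, ⊥) ≤ (c, d) := by
    intro u; rw [← hcd]; exact φ.monotone ⟨ht₁ u, le_rfl⟩
  let Dfun : P → (Set.Iic c) × (Set.Iic d) :=
    fun u => (⟨(φ (u, ⊥)).1, (hble u).1⟩, ⟨(φ (u, ⊥)).2, (hble u).2⟩)
  have hDinj : Function.Injective Dfun := by
    intro u u' huu
    have h1 : (φ (u, ⊥)).1 = (φ (u', ⊥)).1 :=
      congrArg (fun p : (Set.Iic c) × (Set.Iic d) => (p.1 : P)) huu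
    have h2 : (φ (u, ⊥)).2 = (φ (u', ⊥)).2 :=
      congrArg (fun p : (Set.Iic c) × (Set.Iic d) => (p.2 : Q)) huu
    have h3 : φ (u, ⊥) = φ (u', ⊥) := Prod.ext h1 h2
    exact congrArg Prod.fst (φ.injective h3)
  have hDsurj : Function.Surjective Dfun := by
    rintro ⟨⟨r, hr⟩, ⟨s, hs⟩⟩
    have h1 : ((r, s) : P × Q) ≤ (c, d) := ⟨hr, hs⟩
    rw [← hcd] at h1
    have h2 : φ.symm (r, s) ≤ (t₁, ⊥) := by
      have := φ.symm.monotone h1; rwa [φ.symm_apply_apply] at this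
    have h3 : (φ.symm (r, s)).2 = ⊥ := le_antisymm h2.2 bot_le
    refine ⟨(φ.symm (r, s)).1, ?_⟩
    have h4 : ((φ.symm (r, s)).1, (⊥ : Q)) = φ.symm (r, s) := Prod.ext rfl h3.symm
    apply Prod.ext <;> apply Subtype.ext
    · show (φ ((φ.symm (r, s)).1, ⊥)).1 = r
      rw [h4, φ.apply_symm_apply]
    · show (φ ((φ.symm (r, s)).1, ⊥)).2 = s
      rw [h4, φ.apply_symm_apply]
  let D : P ≃o (Set.Iic c) × (Set.Iic d) :=
    { toEquiv := Equiv.ofBijective Dfun ⟨hDinj, hDsurj⟩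
      map_rel_iff' := by
        intro u u'
        constructor
        · intro hle
          have h3 : φ (u, ⊥) ≤ φ (u', ⊥) := ⟨hle.1, hle.2⟩
          exact (φ.le_iff_le.mp h3).1
        · intro hle
          have h3 : φ (u, ⊥) ≤ φ (u', ⊥) := φ.monotone ⟨hle, le_rfl⟩
          exact ⟨h3.1, h3.2⟩ }
  -- contradiction with relative primality
  apply h
  refine ⟨R, hR, hRprime, ?_, ?_⟩
  · have e3 : P ≃o R.carrier × ((Set.Iic c) × S.carrier) :=
      D.trans ((OrderIso.prodCongr' (OrderIso.refl _) eR).trans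
        ((OrderIso.prodComm).trans (OrderIso.prodAssoc'.trans
          (OrderIso.prodCongr' (OrderIso.refl _) OrderIso.prodComm))))
    obtain ⟨s₂, hs₂⟩ := factor_snd (hP.congr e3)
    exact ⟨BddPoset.mk ((Set.Iic c) × S.carrier), ⟨s₂, hs₂⟩, ⟨e3⟩⟩
  · have e4 : Q ≃o R.carrier × (S.carrier × (Set.Iic d')) :=
      G.trans ((OrderIso.prodCongr' eR (OrderIso.refl _)).trans OrderIso.prodAssoc')
    obtain ⟨s₃, hs₃⟩ := factor_snd (hQ.congr e4)
    exact ⟨BddPoset.mk (S.carrier × (Set.Iic d')), ⟨s₃, hs₃⟩, ⟨e4⟩⟩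

/-- If abstract polytopes `P` and `Q` are relatively prime with respect to the join,
then `Aut(P * Q) ≅ Aut(P) × Aut(Q)`. -/
theorem aut_join_of_relPrime (P Q : Type u) [PartialOrder P] [OrderBot P]
    [PartialOrder Q] [OrderBot Q] (m n : ℤ)
    (hP : IsAbstractPolytope P m) (hQ : IsAbstractPolytope Q n)
    (h : JoinRelPrime P Q) :
    Nonempty (((P × Q) ≃o (P × Q)) ≃* ((P ≃o P) × (Q ≃o Q))) := by
  obtain ⟨t₁, ht₁⟩ := hP.exists_top
  obtain ⟨t₂, ht₂⟩ := hQ.exists_top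
  have h' : JoinRelPrime Q P := by
    rintro ⟨R, hR, hp, hfQ, hfP⟩
    exact h ⟨R, hR, hp, hfP, hfQ⟩
  have keyP : ∀ φ : (P × Q) ≃o (P × Q), ∀ u : P, (φ (u, ⊥)).2 = ⊥ := by
    intro φ u
    have hk := key_snd_bot hP hQ h ht₁ φ
    have hle : φ (u, ⊥) ≤ φ (t₁, ⊥) := φ.monotone ⟨ht₁ u, le_rfl⟩
    have h2 : (φ (u, ⊥)).2 ≤ (φ (t₁, ⊥)).2 := hle.2
    rw [hk] at h2
    exact le_antisymm h2 bot_le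
  have keyQ : ∀ φ : (P × Q) ≃o (P × Q), ∀ v : Q, (φ (⊥, v)).1 = ⊥ := by
    intro φ v
    let ψ : (Q × P) ≃o (Q × P) :=
      (OrderIso.prodComm).trans (φ.trans (OrderIso.prodComm))
    have hk := key_snd_bot hQ hP h' ht₂ ψ
    have hv : ψ (v, ⊥) ≤ ψ (t₂, ⊥) := ψ.monotone ⟨ht₂ v, le_rfl⟩
    have h2 : (ψ (v, ⊥)).2 ≤ (ψ (t₂, ⊥)).2 := hv.2
    rw [hk] at h2
    exact le_antisymm h2 bot_le
  have hdecomp : ∀ φ : (P × Q) ≃o (P × Q), ∀ (u : P) (v : Q),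
      φ (u, v) = ((φ (u, ⊥)).1, (φ (⊥, v)).2) := by
    intro φ u v
    have hlub : IsLUB {((u, ⊥) : P × Q), (⊥, v)} (u, v) := by
      constructor
      · rintro r (rfl | hr)
        · exact ⟨le_rfl, bot_le⟩
        · simp only [Set.mem_singleton_iff] at hr; rw [hr]; exact ⟨bot_le, le_rfl⟩
      · intro l hl
        have h1 := hl (Set.mem_insert _ _)
        have h2 := hl (Set.mem_insert_of_mem _ rfl)
        exact ⟨h1.1, h2.2⟩
    have himg := (φ.isLUB_image').mpr hlub
    rw [Set.image_pair] at himg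
    have hlub2 : IsLUB {φ (u, ⊥), φ (⊥, v)} (((φ (u, ⊥)).1, (φ (⊥, v)).2) : P × Q) := by
      constructor
      · rintro r (rfl | hr)
        · exact ⟨le_rfl, by rw [keyP φ u]; exact bot_le⟩
        · simp only [Set.mem_singleton_iff] at hr; rw [hr]
          exact ⟨by rw [keyQ φ v]; exact bot_le, le_rfl⟩
      · intro l hl
        have h1 := hl (Set.mem_insert _ _)
        have h2 := hl (Set.mem_insert_of_mem _ rfl)
        exact ⟨h1.1, h2.2⟩
    exact himg.unique hlub2
  let Fmap : ((P × Q) ≃o (P × Q)) → (P ≃o P) := fun φ =>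
    { toFun := fun u => (φ (u, ⊥)).1
      invFun := fun u => (φ.symm (u, ⊥)).1
      left_inv := by
        intro u
        have h1 : ((φ (u, ⊥)).1, (⊥ : Q)) = φ (u, ⊥) := Prod.ext rfl (keyP φ u).symm
        show (φ.symm ((φ (u, ⊥)).1, ⊥)).1 = u
        rw [h1, φ.symm_apply_apply]
      right_inv := by
        intro u
        have h1 : ((φ.symm (u, ⊥)).1, (⊥ : Q)) = φ.symm (u, ⊥) :=
          Prod.ext rfl (keyP φ.symm u).symm
        show (φ ((φ.symm (u, ⊥)).1, ⊥)).1 = u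
        rw [h1, φ.apply_symm_apply]
      map_rel_iff' := by
        intro u u'
        constructor
        · intro hle
          have h2 : φ (u, ⊥) ≤ φ (u', ⊥) := by
            refine ⟨hle, ?_⟩
            rw [keyP φ u]; exact bot_le
          exact (φ.le_iff_le.mp h2).1
        · intro hle
          have h2 : ((u, (⊥ : Q)) : P × Q) ≤ (u', ⊥) := ⟨hle, le_rfl⟩
          exact (φ.monotone h2).1 }
  let Gmap : ((P × Q) ≃o (P × Q)) → (Q ≃o Q) := fun φ =>
    { toFun := fun v => (φ (⊥, v)).2
      invFun := fun v => (φ.symm (⊥, v)).2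
      left_inv := by
        intro v
        have h1 : ((⊥ : P), (φ (⊥, v)).2) = φ (⊥, v) := Prod.ext (keyQ φ v).symm rfl
        show (φ.symm (⊥, (φ (⊥, v)).2)).2 = v
        rw [h1, φ.symm_apply_apply]
      right_inv := by
        intro v
        have h1 : ((⊥ : P), (φ.symm (⊥, v)).2) = φ.symm (⊥, v) :=
          Prod.ext (keyQ φ.symm v).symm rfl
        show (φ ((⊥ : P), (φ.symm (⊥, v)).2)).2 = v
        rw [h1, φ.apply_symm_apply]
      map_rel_iff' := by
        intro v v'
        constructor
        · intro hle
          have h2 : φ (⊥, v) ≤ φ (⊥, v') := by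
            refine ⟨?_, hle⟩
            rw [keyQ φ v]; exact bot_le
          exact (φ.le_iff_le.mp h2).2
        · intro hle
          have h2 : (((⊥ : P), v) : P × Q) ≤ (⊥, v') := ⟨le_rfl, hle⟩
          exact (φ.monotone h2).2 }
  refine ⟨{ toFun := fun φ => (Fmap φ, Gmap φ)
            invFun := fun fg => OrderIso.prodCongr' fg.1 fg.2
            left_inv := ?_
            right_inv := ?_
            map_mul' := ?_ }⟩
  · intro φ
    apply RelIso.ext
    rintro ⟨u, v⟩
    exact (hdecomp φ u v).symm
  · rintro ⟨f, g⟩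
    refine Prod.ext ?_ ?_
    · exact RelIso.ext fun u => rfl
    · exact RelIso.ext fun v => rfl
  · intro φ ψ
    refine Prod.ext ?_ ?_
    · apply RelIso.ext
      intro u
      show (φ (ψ (u, ⊥))).1 = (φ ((ψ (u, ⊥)).1, ⊥)).1
      have h1 : ((ψ (u, ⊥)).1, (⊥ : Q)) = ψ (u, ⊥) := Prod.ext rfl (keyP ψ u).symm
      rw [h1]
    · apply RelIso.ext
      intro v
      show (φ (ψ (⊥, v))).2 = (φ (⊥, (ψ (⊥, v)).2)).2
      have h1 : ((⊥ : P), (ψ (⊥, v)).2) = ψ (⊥, v) := Prod.ext (keyQ ψ v).symm rfl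
      rw [h1]
end
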